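/- arXiv:1705.08024 — 4 statements merged into one kernel-verified Lean document; each statement's English description precedes it below -/
import Mathlib

section
/- Let A be a finite-dimensional Z-graded K-algebra with triangular decomposition (A⁻,T,A⁺), and let λ be a simple graded T-module concentrated in degree d. Then the proper standard module Δ̄(λ) has a simple head L(λ), the degree-d component of L(λ) is isomorphic to λ as a T-module, and L(λ) is supported in degrees ≤ d. -/
open scoped TensorProduct

universe u

namespace TriangularPaper

variable (K A : Type u) [Field K] [Ring A] [Algebra K A]

/-- The multiplication map `M ⊗ N → A` for two `K`-subspaces of `A`. -/
noncomputable def mulMap (M N : Submodule K A) : (↥M ⊗[K] ↥N) →ₗ[K] A :=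
  (LinearMap.mul' K A).comp (TensorProduct.map M.subtype N.subtype)

/-- The triple multiplication map `(P ⊗ Q) ⊗ R → A`. -/
noncomputable def triMulMap (P Q R : Submodule K A) :
    ((↥P ⊗[K] ↥Q) ⊗[K] ↥R) →ₗ[K] A :=
  (LinearMap.mul' K A).comp (TensorProduct.map (mulMap K A P Q) R.subtype)

/-- A triangular decomposition `(A⁻, T, A⁺)` of the finite-dimensional graded algebra `A`
with internal grading `𝒜`, in the sense of Holmes–Nakano. -/
structure TriangularDecomposition (𝒜 : ℤ → Submodule K A)
    (Am T Ap : Subalgebra K A) : Prop where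
  /-- `𝒜` is a grading of `A` -/
  internal : DirectSum.IsInternal 𝒜
  one_mem : (1 : A) ∈ 𝒜 0
  mul_mem : ∀ i j : ℤ, ∀ a b : A, a ∈ 𝒜 i → b ∈ 𝒜 j → a * b ∈ 𝒜 (i + j)
  /-- multiplication `A⁻ ⊗ T ⊗ A⁺ → A` is a linear isomorphism -/
  mul_bij : Function.Bijective (triMulMap K A Am.toSubmodule T.toSubmodule Ap.toSubmodule)
  /-- `T` is concentrated in degree `0` -/
  T_deg0 : T.toSubmodule ≤ 𝒜 0
  /-- `A⁻` is supported in nonpositive degrees -/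
  neg_supp : Am.toSubmodule ≤ ⨆ n : ℕ, 𝒜 (-(n : ℤ))
  /-- `A⁺` is supported in nonnegative degrees -/
  pos_supp : Ap.toSubmodule ≤ ⨆ n : ℕ, 𝒜 (n : ℤ)
  /-- `A⁻` is a graded subalgebra -/
  neg_graded : Am.toSubmodule = ⨆ i : ℤ, Am.toSubmodule ⊓ 𝒜 i
  /-- `A⁺` is a graded subalgebra -/
  pos_graded : Ap.toSubmodule = ⨆ i : ℤ, Ap.toSubmodule ⊓ 𝒜 i
  /-- `A⁻₀ = K` -/
  neg_deg0 : Am.toSubmodule ⊓ 𝒜 0 = Submodule.span K {(1 : A)}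
  /-- `A⁺₀ = K` -/
  pos_deg0 : Ap.toSubmodule ⊓ 𝒜 0 = Submodule.span K {(1 : A)}
  /-- `A⁺T = TA⁺` as subspaces of `A` -/
  comm_pos : Ap.toSubmodule * T.toSubmodule = T.toSubmodule * Ap.toSubmodule
  /-- `A⁻T = TA⁻` as subspaces of `A` -/
  comm_neg : Am.toSubmodule * T.toSubmodule = T.toSubmodule * Am.toSubmodule
  /-- `T` is a split `K`-algebra -/
  T_split : ∀ (V : Type u) [AddCommGroup V] [Module ↥T V], IsSimpleModule ↥T V →
    ∀ f : V →ₗ[↥T] V, ∃ c : K, ∀ v, f v = algebraMap K ↥T c • v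

/-- The negative Borel subalgebra `B⁻ = A⁻T` (as a subspace). -/
noncomputable def Bneg (Am T : Subalgebra K A) : Submodule K A :=
  Am.toSubmodule * T.toSubmodule

/-- The positive Borel subalgebra `B⁺ = A⁺T` (as a subspace). -/
noncomputable def Bpos (T Ap : Subalgebra K A) : Submodule K A :=
  Ap.toSubmodule * T.toSubmodule

/-- The augmentation ideal `J⁺` of the positive Borel subalgebra. -/
noncomputable def Jpos (𝒜 : ℤ → Submodule K A) (T Ap : Subalgebra K A) : Submodule K A :=
  ⨆ (i : ℤ) (_ : 0 < i), Bpos K A T Ap ⊓ 𝒜 i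

/-- The augmentation ideal `J⁻` of the negative Borel subalgebra. -/
noncomputable def Jneg (𝒜 : ℤ → Submodule K A) (Am T : Subalgebra K A) : Submodule K A :=
  ⨆ (i : ℤ) (_ : i < 0), Bneg K A Am T ⊓ 𝒜 i

/-- `(D, ι)` realizes the proper standard module `Δ̄(M) = A ⊗_{B⁺} Inf_T^{B⁺} M`,
expressed through its universal property `Hom_A(Δ̄(M), N) ≅ Hom_{B⁺}(Inf M, Res N)`. -/
def IsProperStandardFor (𝒜 : ℤ → Submodule K A) (T Ap : Subalgebra K A)
    (M : Type u) [AddCommGroup M] [Module ↥T M]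
    (D : Type u) [AddCommGroup D] [Module A D] (ι : M →+ D) : Prop :=
  (∀ (t : ↥T) (m : M), ι (t • m) = (t : A) • ι m) ∧
  (∀ a ∈ Jpos K A 𝒜 T Ap, ∀ m : M, a • ι m = 0) ∧
  ∀ (N : Type u) [AddCommGroup N] [Module A N] (f : M →+ N),
    (∀ (t : ↥T) (m : M), f (t • m) = (t : A) • f m) →
    (∀ a ∈ Jpos K A 𝒜 T Ap, ∀ m : M, a • f m = 0) →
    ∃! F : D →ₗ[A] N, ∀ m, F (ι m) = f m

/-- `(D, p)` realizes the proper costandard module `∇̄(M)`, expressed through its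
couniversal property `Hom_A(N, ∇̄(M)) ≅ Hom_{B⁻}(Res N, Inf M)`. -/
def IsProperCostandardFor (𝒜 : ℤ → Submodule K A) (Am T : Subalgebra K A)
    (M : Type u) [AddCommGroup M] [Module ↥T M]
    (D : Type u) [AddCommGroup D] [Module A D] (p : D →+ M) : Prop :=
  (∀ (t : ↥T) (x : D), p ((t : A) • x) = t • p x) ∧
  (∀ a ∈ Jneg K A 𝒜 Am T, ∀ x : D, p (a • x) = 0) ∧
  ∀ (N : Type u) [AddCommGroup N] [Module A N] (f : N →+ M),
    (∀ (t : ↥T) (x : N), f ((t : A) • x) = t • f x) →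
    (∀ a ∈ Jneg K A 𝒜 Am T, ∀ x : N, f (a • x) = 0) →
    ∃! F : N →ₗ[A] D, ∀ x, p (F x) = f x

/-- A compatible grading on an `A`-module `D`, making it an object of `𝒢(A)`. -/
def IsModuleGrading (𝒜 : ℤ → Submodule K A) {D : Type u} [AddCommGroup D] [Module A D]
    [Module K D] [IsScalarTower K A D] (ℳ : ℤ → Submodule K D) : Prop :=
  DirectSum.IsInternal ℳ ∧
    ∀ (i j : ℤ) (a : A) (x : D), a ∈ 𝒜 i → x ∈ ℳ j → a • x ∈ ℳ (i + j)

end TriangularPaper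

namespace TriangularPaper
section Proj
variable {K : Type u} [Field K] {V : Type u} [AddCommGroup V] [Module K V]
  (ℳ : ℤ → Submodule K V)

noncomputable def gradeEquiv (hi : DirectSum.IsInternal ℳ) : (DirectSum ℤ fun i => ↥(ℳ i)) ≃ₗ[K] V :=
  LinearEquiv.ofBijective (DirectSum.coeLinearMap ℳ) hi

noncomputable def proj (hi : DirectSum.IsInternal ℳ) (j : ℤ) : V →ₗ[K] V :=
  (ℳ j).subtype ∘ₗ (DirectSum.component K ℤ _ j) ∘ₗ (gradeEquiv ℳ hi).symm.toLinearMap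

variable (hi : DirectSum.IsInternal ℳ)

lemma proj_mem (j : ℤ) (x : V) : proj ℳ hi j x ∈ ℳ j :=
  ((gradeEquiv ℳ hi).symm x j).2

lemma proj_apply (j : ℤ) (x : V) :
    proj ℳ hi j x = ((gradeEquiv ℳ hi).symm x j : V) := rfl

lemma proj_of_mem {j : ℤ} {x : V} (hx : x ∈ ℳ j) : proj ℳ hi j x = x := by
  rw [proj_apply]; unfold gradeEquiv; rw [DirectSum.IsInternal.ofBijective_coeLinearMap_of_mem hi hx]

lemma proj_of_mem_ne {i j : ℤ} (hij : i ≠ j) {x : V} (hx : x ∈ ℳ i) : proj ℳ hi j x = 0 := by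
  rw [proj_apply]; unfold gradeEquiv; rw [DirectSum.IsInternal.ofBijective_coeLinearMap_of_mem_ne hi hij hx]
  rfl

lemma proj_eq_zero_of_mem_iSup {p : ℤ → Prop} {j : ℤ} {x : V}
    (hx : x ∈ ⨆ i, ⨆ (_ : p i), ℳ i) (hp : ∀ i, p i → i ≠ j) : proj ℳ hi j x = 0 := by
  induction hx using Submodule.iSup_induction' with
  | mem i y hy =>
    rcases Classical.em (p i) with h | h
    · rw [iSup_pos h] at hy; exact proj_of_mem_ne ℳ hi (hp i h) hy
    · rw [iSup_neg h] at hy; simp_all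
  | zero => simp
  | add x y _ _ hx hy => rw [map_add, hx, hy, add_zero]

lemma sub_proj_mem (j : ℤ) (x : V) : x - proj ℳ hi j x ∈ ⨆ i, ⨆ (_ : i ≠ j), ℳ i := by
  have hx : x ∈ ⨆ i, ℳ i := hi.submodule_iSup_eq_top ▸ Submodule.mem_top
  induction hx using Submodule.iSup_induction' with
  | mem i y hy =>
    rcases eq_or_ne i j with rfl | h
    · rw [proj_of_mem ℳ hi hy]; simp
    · rw [proj_of_mem_ne ℳ hi h hy, sub_zero]
      exact Submodule.mem_iSup_of_mem i (by rw [iSup_pos h]; exact hy)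
  | zero => simp
  | add x y _ _ hx hy =>
    have : x + y - proj ℳ hi j (x + y) = (x - proj ℳ hi j x) + (y - proj ℳ hi j y) := by
      rw [map_add]; abel
    rw [this]; exact Submodule.add_mem _ hx hy

/-- projection commutes with degree-0 action (general form for module gradings). -/
lemma proj_smul₀ {A : Type u} [Ring A] [Algebra K A] (𝒜 : ℤ → Submodule K A)
    [Module A V] [IsScalarTower K A V]
    (hcomp : ∀ (i j : ℤ) (a : A) (x : V), a ∈ 𝒜 i → x ∈ ℳ j → a • x ∈ ℳ (i + j))
    {a : A} (ha : a ∈ 𝒜 0) (j : ℤ) (x : V) :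
    proj ℳ hi j (a • x) = a • proj ℳ hi j x := by
  have hx : x ∈ ⨆ i, ℳ i := hi.submodule_iSup_eq_top ▸ Submodule.mem_top
  induction hx using Submodule.iSup_induction' with
  | mem i y hy =>
    rcases eq_or_ne i j with rfl | h
    · rw [proj_of_mem ℳ hi hy, proj_of_mem ℳ hi (by simpa using hcomp 0 _ a y ha hy)]
    · rw [proj_of_mem_ne ℳ hi h hy, proj_of_mem_ne ℳ hi h (by simpa using hcomp 0 i a y ha hy), smul_zero]
  | zero => simp
  | add x y _ _ hx hy => rw [smul_add, map_add, map_add, hx, hy, smul_add]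

end Proj
section TriDec
variable {K A : Type u} [Field K] [Ring A] [Algebra K A]

/-- the positive part of the grading of `A` -/
noncomputable def posP (𝒜 : ℤ → Submodule K A) : Submodule K A := ⨆ i, ⨆ (_ : 0 < i), 𝒜 i

lemma proj_eq_zero_of_reindex {V : Type u} [AddCommGroup V] [Module K V]
    (ℳ : ℤ → Submodule K V) (hi : DirectSum.IsInternal ℳ) {ι' : Sort*} (f : ι' → ℤ)
    {j : ℤ} {x : V} (hx : x ∈ ⨆ k, ℳ (f k)) (hf : ∀ k, f k ≠ j) : proj ℳ hi j x = 0 := by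
  induction hx using Submodule.iSup_induction' with
  | mem i y hy => exact proj_of_mem_ne ℳ hi (hf i) hy
  | zero => simp
  | add x y _ _ hx hy => rw [map_add, hx, hy, add_zero]

variable {𝒜 : ℤ → Submodule K A} {Am T Ap : Subalgebra K A}

/-- abbreviation for the degree-0 projection of `A` -/
noncomputable def p0 (h : TriangularDecomposition K A 𝒜 Am T Ap) : A →ₗ[K] A :=
  proj 𝒜 h.internal 0

lemma p0_of_deg0 (h : TriangularDecomposition K A 𝒜 Am T Ap) {x : A} (hx : x ∈ 𝒜 0) :
    p0 h x = x := proj_of_mem 𝒜 h.internal hx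

lemma p0_of_deg_ne (h : TriangularDecomposition K A 𝒜 Am T Ap) {i : ℤ} (hi : i ≠ 0) {x : A}
    (hx : x ∈ 𝒜 i) : p0 h x = 0 := proj_of_mem_ne 𝒜 h.internal hi hx

lemma p0_mem (h : TriangularDecomposition K A 𝒜 Am T Ap) (x : A) : p0 h x ∈ 𝒜 0 :=
  proj_mem 𝒜 h.internal 0 x

lemma p0_one (h : TriangularDecomposition K A 𝒜 Am T Ap) : p0 h (1 : A) = 1 :=
  p0_of_deg0 h h.one_mem

lemma p0_T (h : TriangularDecomposition K A 𝒜 Am T Ap) {t : A} (ht : t ∈ T.toSubmodule) :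
    p0 h t = t := p0_of_deg0 h (h.T_deg0 ht)

lemma Ap_piece_neg (h : TriangularDecomposition K A 𝒜 Am T Ap) {i : ℤ} (hi : i < 0) {x : A}
    (hx : x ∈ Ap.toSubmodule) (hx' : x ∈ 𝒜 i) : x = 0 := by
  have h1 : proj 𝒜 h.internal i x = x := proj_of_mem 𝒜 h.internal hx'
  have h2 : proj 𝒜 h.internal i x = 0 :=
    proj_eq_zero_of_reindex 𝒜 h.internal (fun n : ℕ => (n : ℤ)) (h.pos_supp hx)
      (fun n => by show (n : ℤ) ≠ i; omega)
  rw [h1] at h2; exact h2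

lemma Am_piece_pos (h : TriangularDecomposition K A 𝒜 Am T Ap) {i : ℤ} (hi : 0 < i) {x : A}
    (hx : x ∈ Am.toSubmodule) (hx' : x ∈ 𝒜 i) : x = 0 := by
  have h1 : proj 𝒜 h.internal i x = x := proj_of_mem 𝒜 h.internal hx'
  have h2 : proj 𝒜 h.internal i x = 0 :=
    proj_eq_zero_of_reindex 𝒜 h.internal (fun n : ℕ => (-n : ℤ)) (h.neg_supp hx)
      (fun n => by show (-n : ℤ) ≠ i; omega)
  rw [h1] at h2; exact h2

lemma mem_posP {i : ℤ} (hi : 0 < i) {x : A} (hx : x ∈ 𝒜 i) : x ∈ posP 𝒜 :=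
  Submodule.mem_iSup_of_mem i (by rw [iSup_pos hi]; exact hx)

lemma p0_posP (h : TriangularDecomposition K A 𝒜 Am T Ap) {x : A} (hx : x ∈ posP 𝒜) :
    p0 h x = 0 := by
  unfold p0
  induction hx using Submodule.iSup_induction' with
  | mem i y hy =>
    rcases Classical.em (0 < i) with hp | hp
    · rw [iSup_pos hp] at hy; exact proj_of_mem_ne 𝒜 h.internal (by omega) hy
    · rw [iSup_neg hp] at hy; simp_all
  | zero => simp
  | add x y _ _ hx hy => rw [map_add, hx, hy, add_zero]

lemma posP_mul_left (h : TriangularDecomposition K A 𝒜 Am T Ap) {x y : A} (hx : x ∈ 𝒜 0)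
    (hy : y ∈ posP 𝒜) : x * y ∈ posP 𝒜 := by
  induction hy using Submodule.iSup_induction' with
  | mem i z hz =>
    rcases Classical.em (0 < i) with hp | hp
    · rw [iSup_pos hp] at hz
      exact mem_posP hp (by simpa using h.mul_mem 0 i x z hx hz)
    · rw [iSup_neg hp] at hz; simp_all
  | zero => simp [mul_zero]
  | add a b _ _ ha hb => rw [mul_add]; exact Submodule.add_mem _ ha hb

lemma posP_piece_mul (h : TriangularDecomposition K A 𝒜 Am T Ap) {i : ℤ} (hi : 0 ≤ i) {x y : A}
    (hx : x ∈ 𝒜 i) (hy : y ∈ posP 𝒜) : x * y ∈ posP 𝒜 := by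
  induction hy using Submodule.iSup_induction' with
  | mem i' z hz =>
    rcases Classical.em (0 < i') with hp | hp
    · rw [iSup_pos hp] at hz
      exact mem_posP (by omega) (h.mul_mem i i' x z hx hz)
    · rw [iSup_neg hp] at hz; simp_all
  | zero => simp [mul_zero]
  | add a b _ _ ha hb => rw [mul_add]; exact Submodule.add_mem _ ha hb

lemma posP_mul_right (h : TriangularDecomposition K A 𝒜 Am T Ap) {x y : A} (hx : x ∈ posP 𝒜)
    (hy : y ∈ 𝒜 0) : x * y ∈ posP 𝒜 := by
  induction hx using Submodule.iSup_induction' with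
  | mem i z hz =>
    rcases Classical.em (0 < i) with hp | hp
    · rw [iSup_pos hp] at hz
      exact mem_posP hp (by simpa using h.mul_mem i 0 z y hz hy)
    · rw [iSup_neg hp] at hz; simp_all
  | zero => simp [zero_mul]
  | add a b _ _ ha hb => rw [add_mul]; exact Submodule.add_mem _ ha hb

lemma posP_mul_posP (h : TriangularDecomposition K A 𝒜 Am T Ap) {x y : A} (hx : x ∈ posP 𝒜)
    (hy : y ∈ posP 𝒜) : x * y ∈ posP 𝒜 := by
  induction hx using Submodule.iSup_induction' with
  | mem i z hz =>
    rcases Classical.em (0 < i) with hp | hp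
    · rw [iSup_pos hp] at hz
      exact posP_piece_mul h (by omega) hz hy
    · rw [iSup_neg hp] at hz; simp_all
  | zero => simp [zero_mul]
  | add a b _ _ ha hb => rw [add_mul]; exact Submodule.add_mem _ ha hb

/-- main structural lemma for `B⁺`: degree-0 part in `T`, the rest in `J⁺`. -/
lemma Bpos_decomp (h : TriangularDecomposition K A 𝒜 Am T Ap) {b : A}
    (hb : b ∈ Bpos K A T Ap) :
    p0 h b ∈ T.toSubmodule ∧ b - p0 h b ∈ Jpos K A 𝒜 T Ap := by
  refine Submodule.mul_induction_on hb ?_ ?_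
  · intro y hy t ht
    rw [Subalgebra.mem_toSubmodule] at hy
    have hy' : y ∈ ⨆ i, Ap.toSubmodule ⊓ 𝒜 i := by
      rw [← h.pos_graded]; exact hy
    clear hy
    induction hy' using Submodule.iSup_induction' with
    | mem i y hy =>
      rcases lt_trichotomy i 0 with hi | rfl | hi
      · have : y = 0 := Ap_piece_neg h hi hy.1 hy.2
        subst this
        simp only [zero_mul, map_zero]
        exact ⟨Submodule.zero_mem _, by simpa using Submodule.zero_mem _⟩
      · have hy0 : y ∈ Submodule.span K {(1:A)} := h.pos_deg0 ▸ hy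
        rcases Submodule.mem_span_singleton.mp hy0 with ⟨c, rfl⟩
        have hyt : (c • (1:A)) * t = c • t := by rw [smul_mul_assoc, one_mul]
        rw [hyt]
        have hpt : p0 h (c • t) = c • t := by rw [map_smul, p0_T h ht]
        rw [hpt]
        exact ⟨Submodule.smul_mem _ _ ht, by simpa using Submodule.zero_mem _⟩
      · have hyt : y * t ∈ 𝒜 i := by simpa using h.mul_mem i 0 y t hy.2 (h.T_deg0 ht)
        have hp : p0 h (y * t) = 0 := p0_of_deg_ne h (by omega) hyt
        rw [hp]
        refine ⟨Submodule.zero_mem _, ?_⟩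
        rw [sub_zero]
        refine Submodule.mem_iSup_of_mem i (Submodule.mem_iSup_of_mem hi ?_)
        exact ⟨Submodule.mul_mem_mul hy.1 ht, hyt⟩
    | zero =>
      simp only [zero_mul, map_zero]
      exact ⟨Submodule.zero_mem _, by simpa using Submodule.zero_mem _⟩
    | add a b _ _ ha hb =>
      rw [add_mul, map_add]
      refine ⟨Submodule.add_mem _ ha.1 hb.1, ?_⟩
      have : a * t + b * t - (p0 h (a * t) + p0 h (b * t))
          = (a * t - p0 h (a * t)) + (b * t - p0 h (b * t)) := by abel
      rw [this]; exact Submodule.add_mem _ ha.2 hb.2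
  · intro a b ha hb
    rw [map_add]
    refine ⟨Submodule.add_mem _ ha.1 hb.1, ?_⟩
    have : a + b - (p0 h a + p0 h b) = (a - p0 h a) + (b - p0 h b) := by abel
    rw [this]; exact Submodule.add_mem _ ha.2 hb.2

lemma Jpos_le_Bpos : Jpos K A 𝒜 T Ap ≤ Bpos K A T Ap :=
  iSup_le fun _ => iSup_le fun _ => inf_le_left

lemma Jpos_le_posP : Jpos K A 𝒜 T Ap ≤ posP 𝒜 := by
  refine iSup_le fun i => iSup_le fun hi => le_trans inf_le_right (le_iSup_of_le i ?_)
  rw [iSup_pos hi]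

lemma p0_Jpos (h : TriangularDecomposition K A 𝒜 Am T Ap) {a : A}
    (ha : a ∈ Jpos K A 𝒜 T Ap) : p0 h a = 0 := p0_posP h (Jpos_le_posP ha)

lemma T_le_Bpos : T.toSubmodule ≤ Bpos K A T Ap := by
  intro t ht
  have h1 : (1 : A) ∈ Ap.toSubmodule := (Subalgebra.mem_toSubmodule Ap).mpr (one_mem Ap)
  simpa [Bpos] using Submodule.mul_mem_mul h1 ht

lemma Ap_le_Bpos : Ap.toSubmodule ≤ Bpos K A T Ap := by
  intro y hy
  have h1 : (1 : A) ∈ T.toSubmodule := (Subalgebra.mem_toSubmodule T).mpr (one_mem T)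
  simpa [Bpos] using Submodule.mul_mem_mul hy h1

lemma one_mem_Bpos : (1 : A) ∈ Bpos K A T Ap :=
  T_le_Bpos ((Subalgebra.mem_toSubmodule T).mpr (one_mem T))

lemma Bpos_mul_Bpos (h : TriangularDecomposition K A 𝒜 Am T Ap) :
    Bpos K A T Ap * Bpos K A T Ap ≤ Bpos K A T Ap := by
  unfold Bpos
  have h1 : Ap.toSubmodule * Ap.toSubmodule ≤ Ap.toSubmodule := by
    rw [Submodule.mul_le]; intro m hm n hn
    exact (Subalgebra.mem_toSubmodule Ap).mpr
      (mul_mem ((Subalgebra.mem_toSubmodule Ap).mp hm) ((Subalgebra.mem_toSubmodule Ap).mp hn))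
  have h2 : T.toSubmodule * T.toSubmodule ≤ T.toSubmodule := by
    rw [Submodule.mul_le]; intro m hm n hn
    exact (Subalgebra.mem_toSubmodule T).mpr
      (mul_mem ((Subalgebra.mem_toSubmodule T).mp hm) ((Subalgebra.mem_toSubmodule T).mp hn))
  have e : Ap.toSubmodule * T.toSubmodule * (Ap.toSubmodule * T.toSubmodule)
      = (Ap.toSubmodule * Ap.toSubmodule) * (T.toSubmodule * T.toSubmodule) := by
    rw [mul_assoc, ← mul_assoc T.toSubmodule Ap.toSubmodule T.toSubmodule, ← h.comm_pos,
      mul_assoc Ap.toSubmodule T.toSubmodule T.toSubmodule, ← mul_assoc]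
  rw [e]
  exact mul_le_mul' h1 h2

lemma mul_mem_Bpos (h : TriangularDecomposition K A 𝒜 Am T Ap) {x y : A}
    (hx : x ∈ Bpos K A T Ap) (hy : y ∈ Bpos K A T Ap) : x * y ∈ Bpos K A T Ap :=
  Bpos_mul_Bpos h (Submodule.mul_mem_mul hx hy)

/-- `p₀` is multiplicative on `B⁺`. -/
lemma p0_mul_Bpos (h : TriangularDecomposition K A 𝒜 Am T Ap) {b b' : A}
    (hb : b ∈ Bpos K A T Ap) (hb' : b' ∈ Bpos K A T Ap) :
    p0 h (b * b') = p0 h b * p0 h b' := by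
  obtain ⟨h1, h2⟩ := Bpos_decomp h hb
  obtain ⟨h1', h2'⟩ := Bpos_decomp h hb'
  have e : b * b' = p0 h b * p0 h b' +
      (p0 h b * (b' - p0 h b') + (b - p0 h b) * p0 h b' + (b - p0 h b) * (b' - p0 h b')) := by
    noncomm_ring
  have m0 : p0 h b ∈ 𝒜 0 := p0_mem h b
  have m0' : p0 h b' ∈ 𝒜 0 := p0_mem h b'
  have q2 : b - p0 h b ∈ posP 𝒜 := Jpos_le_posP h2
  have q2' : b' - p0 h b' ∈ posP 𝒜 := Jpos_le_posP h2'
  rw [e, map_add, map_add, map_add]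
  rw [p0_of_deg0 h (by simpa using h.mul_mem 0 0 _ _ m0 m0')]
  rw [p0_posP h (posP_mul_left h m0 q2'), p0_posP h (posP_mul_right h q2 m0'),
    p0_posP h (posP_mul_posP h q2 q2')]
  abel

end TriDec
section AmSide
variable {K A : Type u} [Field K] [Ring A] [Algebra K A]
  {𝒜 : ℤ → Submodule K A} {Am T Ap : Subalgebra K A}

/-- negative graded pieces of `A⁻` -/
noncomputable def negAmP (𝒜 : ℤ → Submodule K A) (Am : Subalgebra K A) : Submodule K A :=
  ⨆ i, ⨆ (_ : i < 0), Am.toSubmodule ⊓ 𝒜 i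

lemma Am_decomp (h : TriangularDecomposition K A 𝒜 Am T Ap) {x : A}
    (hx : x ∈ Am.toSubmodule) :
    p0 h x ∈ Submodule.span K {(1 : A)} ∧ x - p0 h x ∈ negAmP 𝒜 Am := by
  have hx' : x ∈ ⨆ i, Am.toSubmodule ⊓ 𝒜 i := by rw [← h.neg_graded]; exact hx
  clear hx
  induction hx' using Submodule.iSup_induction' with
  | mem i y hy =>
    rcases lt_trichotomy i 0 with hi | rfl | hi
    · rw [p0_of_deg_ne h (by omega) hy.2, sub_zero]
      exact ⟨Submodule.zero_mem _,
        Submodule.mem_iSup_of_mem i (Submodule.mem_iSup_of_mem hi hy)⟩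
    · have hy0 : y ∈ Submodule.span K {(1:A)} := h.neg_deg0 ▸ hy
      have hy1 : y ∈ 𝒜 0 := hy.2
      rw [p0_of_deg0 h hy1]
      exact ⟨hy0, by simpa using Submodule.zero_mem _⟩
    · have : y = 0 := Am_piece_pos h hi hy.1 hy.2
      subst this
      simp only [map_zero, sub_zero]
      exact ⟨Submodule.zero_mem _, Submodule.zero_mem _⟩
  | zero =>
    simp only [map_zero, sub_zero]
    exact ⟨Submodule.zero_mem _, Submodule.zero_mem _⟩
  | add a b _ _ ha hb =>
    rw [map_add]
    refine ⟨Submodule.add_mem _ ha.1 hb.1, ?_⟩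
    have : a + b - (p0 h a + p0 h b) = (a - p0 h a) + (b - p0 h b) := by abel
    rw [this]; exact Submodule.add_mem _ ha.2 hb.2

lemma Am_le_Bneg : Am.toSubmodule ≤ Bneg K A Am T := by
  intro x hx
  have h1 : (1 : A) ∈ T.toSubmodule := (Subalgebra.mem_toSubmodule T).mpr (one_mem T)
  simpa [Bneg] using Submodule.mul_mem_mul hx h1

lemma negAmP_le_Jneg : negAmP 𝒜 Am ≤ Jneg K A 𝒜 Am T := by
  refine iSup_le fun i => iSup_le fun hi => ?_
  refine le_trans ?_ (le_iSup_of_le i (le_of_eq (iSup_pos hi).symm))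
  exact le_inf (le_trans inf_le_left Am_le_Bneg) inf_le_right

/-- the part of the grading of `A` below a fixed degree -/
noncomputable def negLE (𝒜 : ℤ → Submodule K A) (k : ℤ) : Submodule K A :=
  ⨆ i, ⨆ (_ : i ≤ k), 𝒜 i

lemma Jneg_le_negLE : Jneg K A 𝒜 Am T ≤ negLE 𝒜 (-1) := by
  refine iSup_le fun i => iSup_le fun hi => ?_
  refine le_trans inf_le_right (le_iSup_of_le i ?_)
  have hle : i ≤ -1 := by omega
  rw [iSup_pos hle]

lemma negLE_piece_mul (h : TriangularDecomposition K A 𝒜 Am T Ap) {k l i : ℤ} (hik : i ≤ k)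
    {x y : A} (hx : x ∈ 𝒜 i) (hy : y ∈ negLE 𝒜 l) : x * y ∈ negLE 𝒜 (k + l) := by
  induction hy using Submodule.iSup_induction' with
  | mem i' z' hz' =>
    rcases Classical.em (i' ≤ l) with hp' | hp'
    · rw [iSup_pos hp'] at hz'
      refine Submodule.mem_iSup_of_mem (i + i') ?_
      have hle : i + i' ≤ k + l := by omega
      rw [iSup_pos hle]
      exact h.mul_mem i i' x z' hx hz'
    · rw [iSup_neg hp'] at hz'; simp_all
  | zero => simp [mul_zero]
  | add a b _ _ ha hb => rw [mul_add]; exact Submodule.add_mem _ ha hb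

lemma negLE_mul (h : TriangularDecomposition K A 𝒜 Am T Ap) {k l : ℤ} {x y : A}
    (hx : x ∈ negLE 𝒜 k) (hy : y ∈ negLE 𝒜 l) : x * y ∈ negLE 𝒜 (k + l) := by
  induction hx using Submodule.iSup_induction' with
  | mem i z hz =>
    rcases Classical.em (i ≤ k) with hp | hp
    · rw [iSup_pos hp] at hz
      exact negLE_piece_mul h hp hz hy
    · rw [iSup_neg hp] at hz; simp_all
  | zero => simp [zero_mul]
  | add a b _ _ ha hb => rw [add_mul]; exact Submodule.add_mem _ ha hb

lemma Jneg_pow_le (h : TriangularDecomposition K A 𝒜 Am T Ap) (k : ℕ) :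
    Jneg K A 𝒜 Am T ^ (k + 1) ≤ negLE 𝒜 (-(k + 1 : ℕ)) := by
  induction k with
  | zero => simpa using Jneg_le_negLE
  | succ n ih =>
    have : Jneg K A 𝒜 Am T ^ (n + 2) = Jneg K A 𝒜 Am T ^ (n + 1) * Jneg K A 𝒜 Am T :=
      pow_succ _ _
    rw [this]
    refine le_trans (mul_le_mul' ih Jneg_le_negLE) ?_
    rw [Submodule.mul_le]
    intro x hx y hy
    have h2 : (-(n + 1 + 1 : ℕ) : ℤ) = (-(n + 1 : ℕ) : ℤ) + (-1 : ℤ) := by push_cast; ring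
    rw [h2]
    exact negLE_mul h hx hy

/-- In a finite-dimensional algebra, the grading is bounded below. -/
lemma exists_grading_bound (h : TriangularDecomposition K A 𝒜 Am T Ap)
    [FiniteDimensional K A] : ∃ n : ℕ, ∀ i : ℤ, i ≤ -(n : ℤ) → 𝒜 i = ⊥ := by
  classical
  set s : Set ℤ := {i : ℤ | 𝒜 i ≠ ⊥} with hs
  have hfin : s.Finite := by
    have hind : iSupIndep fun i : s => 𝒜 i :=
      (h.internal.submodule_iSupIndep).comp Subtype.val_injective
    have hv : ∀ i : s, ∃ v : A, v ∈ 𝒜 i ∧ v ≠ 0 := by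
      intro i
      by_contra hcon
      push_neg at hcon
      exact i.2 ((Submodule.eq_bot_iff _).mpr fun v hv => by
        by_contra hne; exact hne (by simpa using hcon v hv ▸ rfl))
    choose v hv1 hv2 using hv
    have hli : LinearIndependent K v := hind.linearIndependent _ hv1 hv2
    have : Finite s := hli.finite
    exact s.toFinite
  obtain ⟨b, hb⟩ := hfin.bddBelow
  obtain ⟨n, hn⟩ : ∃ n : ℕ, -(n : ℤ) < b := ⟨(1 - b).toNat, by omega⟩
  refine ⟨n, fun i hi => ?_⟩
  by_contra hne
  have : b ≤ i := hb hne
  omega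

end AmSide

section Phi
variable {K A : Type u} [Field K] [Ring A] [Algebra K A]
  {𝒜 : ℤ → Submodule K A} {Am T Ap : Subalgebra K A}

lemma mulMap_tmul (M N : Submodule K A) (x : ↥M) (y : ↥N) :
    mulMap K A M N (x ⊗ₜ[K] y) = (x : A) * (y : A) := by
  simp [mulMap]

lemma triMulMap_tmul (P Q R : Submodule K A) (x : ↥P) (y : ↥Q) (z : ↥R) :
    triMulMap K A P Q R ((x ⊗ₜ[K] y) ⊗ₜ[K] z) = ((x : A) * (y : A)) * (z : A) := by
  simp [triMulMap, mulMap]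

lemma mulMap_range (M N : Submodule K A) :
    LinearMap.range (mulMap K A M N) = M * N := by
  apply le_antisymm
  · rintro _ ⟨z, rfl⟩
    induction z with
    | zero => simp
    | tmul x y => rw [mulMap_tmul]; exact Submodule.mul_mem_mul x.2 y.2
    | add a b ha hb => rw [map_add]; exact Submodule.add_mem _ ha hb
  · rw [Submodule.mul_le]
    intro m hm n hn
    exact ⟨⟨m, hm⟩ ⊗ₜ ⟨n, hn⟩, mulMap_tmul M N ⟨m, hm⟩ ⟨n, hn⟩⟩

lemma mulMap_T_Ap_injective (h : TriangularDecomposition K A 𝒜 Am T Ap) (h1 : (1 : A) ≠ 0) :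
    Function.Injective (mulMap K A T.toSubmodule Ap.toSubmodule) := by
  have h1m : (1 : A) ∈ Am.toSubmodule := (Subalgebra.mem_toSubmodule Am).mpr (one_mem Am)
  set oneAm : ↥Am.toSubmodule := ⟨1, h1m⟩ with honeAm
  have hone : oneAm ≠ 0 := fun hc => h1 (by simpa [honeAm] using congrArg Subtype.val hc)
  obtain ⟨σ, hσ⟩ := LinearMap.exists_leftInverse_of_injective
    (LinearMap.toSpanSingleton K ↥Am.toSubmodule oneAm)
    (LinearMap.ker_toSpanSingleton K hone)
  have hσ1 : σ oneAm = 1 := by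
    have := congrArg (fun f => f (1 : K)) (congrArg DFunLike.coe hσ)
    simpa [LinearMap.toSpanSingleton] using this
  set u : ↥T.toSubmodule →ₗ[K] (↥Am.toSubmodule ⊗[K] ↥T.toSubmodule) :=
    TensorProduct.mk K _ _ oneAm with hu
  have huinj : Function.Injective u := by
    set w : (↥Am.toSubmodule ⊗[K] ↥T.toSubmodule) →ₗ[K] ↥T.toSubmodule :=
      TensorProduct.lift ((LinearMap.lsmul K ↥T.toSubmodule) ∘ₗ σ) with hw
    have hwu : ∀ t, w (u t) = t := by
      intro t
      simp [hw, hu, hσ1]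
    intro a b hab
    rw [← hwu a, ← hwu b, hab]
  have hrinj : Function.Injective (LinearMap.rTensor ↥Ap.toSubmodule u) := by
    set w : (↥Am.toSubmodule ⊗[K] ↥T.toSubmodule) →ₗ[K] ↥T.toSubmodule :=
      TensorProduct.lift ((LinearMap.lsmul K ↥T.toSubmodule) ∘ₗ σ) with hw
    have hwu : w ∘ₗ u = LinearMap.id := by
      apply LinearMap.ext
      intro t
      simp [hw, hu, hσ1]
    have hcomp : (LinearMap.rTensor ↥Ap.toSubmodule w) ∘ₗ (LinearMap.rTensor ↥Ap.toSubmodule u)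
        = LinearMap.id := by
      rw [← LinearMap.rTensor_comp, hwu, LinearMap.rTensor_id]
    intro a b hab
    have := congrArg (LinearMap.rTensor ↥Ap.toSubmodule w) hab
    simpa [LinearMap.comp_apply] using
      (congrArg (fun f => f a) (congrArg DFunLike.coe hcomp)).symm.trans
        (this.trans (congrArg (fun f => f b) (congrArg DFunLike.coe hcomp)))
  have hfac : (triMulMap K A Am.toSubmodule T.toSubmodule Ap.toSubmodule) ∘ₗ
      (LinearMap.rTensor ↥Ap.toSubmodule u) = mulMap K A T.toSubmodule Ap.toSubmodule := by
    apply TensorProduct.ext'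
    intro t y
    simp [hu, honeAm, triMulMap_tmul, mulMap_tmul]
  intro a b hab
  apply hrinj
  apply h.mul_bij.1
  rw [← LinearMap.comp_apply, hfac, ← LinearMap.comp_apply, hfac]
  exact hab

/-- `T ⊗ A⁺ ≃ B⁺` -/
noncomputable def psiEquiv (h : TriangularDecomposition K A 𝒜 Am T Ap) (h1 : (1 : A) ≠ 0) :
    (↥T.toSubmodule ⊗[K] ↥Ap.toSubmodule) ≃ₗ[K] ↥(Bpos K A T Ap) :=
  (LinearEquiv.ofInjective _ (mulMap_T_Ap_injective h h1)).trans
    (LinearEquiv.ofEq _ _ (by rw [mulMap_range]; exact h.comm_pos.symm))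

lemma psiEquiv_coe (h : TriangularDecomposition K A 𝒜 Am T Ap) (h1 : (1 : A) ≠ 0)
    (z : ↥T.toSubmodule ⊗[K] ↥Ap.toSubmodule) :
    (psiEquiv h h1 z : A) = mulMap K A T.toSubmodule Ap.toSubmodule z := by
  simp [psiEquiv]

lemma chi_bijective (h : TriangularDecomposition K A 𝒜 Am T Ap) (h1 : (1 : A) ≠ 0) :
    Function.Bijective (mulMap K A Am.toSubmodule (Bpos K A T Ap)) := by
  set e : (↥Am.toSubmodule ⊗[K] ↥T.toSubmodule) ⊗[K] ↥Ap.toSubmodule ≃ₗ[K]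
      (↥Am.toSubmodule ⊗[K] ↥(Bpos K A T Ap)) :=
    (TensorProduct.assoc K _ _ _).trans
      (TensorProduct.congr (LinearEquiv.refl K ↥Am.toSubmodule) (psiEquiv h h1)) with he
  have hfac : (mulMap K A Am.toSubmodule (Bpos K A T Ap)) ∘ₗ e.toLinearMap
      = triMulMap K A Am.toSubmodule T.toSubmodule Ap.toSubmodule := by
    apply TensorProduct.ext_threefold
    intro x t y
    simp only [he, LinearMap.comp_apply, LinearEquiv.coe_coe, LinearEquiv.trans_apply,
      TensorProduct.assoc_tmul, TensorProduct.congr_tmul, LinearEquiv.refl_apply]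
    rw [mulMap_tmul, triMulMap_tmul, psiEquiv_coe, mulMap_tmul, mul_assoc]
  have : Function.Bijective
      ((mulMap K A Am.toSubmodule (Bpos K A T Ap)) ∘ e.toLinearMap) := by
    have : ⇑((mulMap K A Am.toSubmodule (Bpos K A T Ap)) ∘ₗ e.toLinearMap)
        = ⇑(mulMap K A Am.toSubmodule (Bpos K A T Ap)) ∘ ⇑e.toLinearMap := rfl
    rw [← this, hfac]
    exact h.mul_bij
  exact (Function.Bijective.of_comp_iff _ e.bijective).mp this

/-- `A⁻ ⊗ B⁺ ≃ A` via multiplication -/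
noncomputable def chiEquiv (h : TriangularDecomposition K A 𝒜 Am T Ap) (h1 : (1 : A) ≠ 0) :
    (↥Am.toSubmodule ⊗[K] ↥(Bpos K A T Ap)) ≃ₗ[K] A :=
  LinearEquiv.ofBijective _ (chi_bijective h h1)

lemma chiEquiv_tmul (h : TriangularDecomposition K A 𝒜 Am T Ap) (h1 : (1 : A) ≠ 0)
    (x : ↥Am.toSubmodule) (b : ↥(Bpos K A T Ap)) :
    chiEquiv h h1 (x ⊗ₜ[K] b) = (x : A) * (b : A) := mulMap_tmul _ _ x b

lemma chiEquiv_symm_mul (h : TriangularDecomposition K A 𝒜 Am T Ap) (h1 : (1 : A) ≠ 0)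
    (x : ↥Am.toSubmodule) (b : ↥(Bpos K A T Ap)) :
    (chiEquiv h h1).symm ((x : A) * (b : A)) = x ⊗ₜ[K] b := by
  rw [LinearEquiv.symm_apply_eq, chiEquiv_tmul]

/-- the "character times projection" contraction `A⁻ ⊗ B⁺ → A` -/
noncomputable def ellMap (h : TriangularDecomposition K A 𝒜 Am T Ap) :
    (↥Am.toSubmodule ⊗[K] ↥(Bpos K A T Ap)) →ₗ[K] A :=
  (LinearMap.mul' K A) ∘ₗ
    (TensorProduct.map ((p0 h) ∘ₗ Am.toSubmodule.subtype) ((p0 h) ∘ₗ (Bpos K A T Ap).subtype))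

lemma ellMap_tmul (h : TriangularDecomposition K A 𝒜 Am T Ap)
    (x : ↥Am.toSubmodule) (b : ↥(Bpos K A T Ap)) :
    ellMap h (x ⊗ₜ[K] b) = p0 h (x : A) * p0 h (b : A) := by
  simp [ellMap]

/-- the projection `φ : A → T` along `A⁻_{<0}B⁺`. -/
noncomputable def phiMap (h : TriangularDecomposition K A 𝒜 Am T Ap) (h1 : (1 : A) ≠ 0) :
    A →ₗ[K] A :=
  (ellMap h) ∘ₗ (chiEquiv h h1).symm.toLinearMap

lemma phiMap_mul (h : TriangularDecomposition K A 𝒜 Am T Ap) (h1 : (1 : A) ≠ 0)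
    (x : ↥Am.toSubmodule) (b : ↥(Bpos K A T Ap)) :
    phiMap h h1 ((x : A) * (b : A)) = p0 h (x : A) * p0 h (b : A) := by
  rw [phiMap, LinearMap.comp_apply, LinearEquiv.coe_coe, chiEquiv_symm_mul, ellMap_tmul]

lemma ellMap_mem_T (h : TriangularDecomposition K A 𝒜 Am T Ap)
    (z : ↥Am.toSubmodule ⊗[K] ↥(Bpos K A T Ap)) : ellMap h z ∈ T.toSubmodule := by
  induction z with
  | zero => simp
  | tmul x b =>
    rw [ellMap_tmul]
    obtain ⟨c, hc⟩ := Submodule.mem_span_singleton.mp (Am_decomp h x.2).1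
    rw [← hc, smul_mul_assoc, one_mul]
    exact Submodule.smul_mem _ _ (Bpos_decomp h b.2).1
  | add a b ha hb => rw [map_add]; exact Submodule.add_mem _ ha hb

lemma phiMap_mem_T (h : TriangularDecomposition K A 𝒜 Am T Ap) (h1 : (1 : A) ≠ 0) (a : A) :
    phiMap h h1 a ∈ T.toSubmodule := ellMap_mem_T h _

lemma phiMap_mul_Bpos (h : TriangularDecomposition K A 𝒜 Am T Ap) (h1 : (1 : A) ≠ 0)
    (a : A) {b : A} (hb : b ∈ Bpos K A T Ap) :
    phiMap h h1 (a * b) = phiMap h h1 a * p0 h b := by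
  have key : ∀ z : ↥Am.toSubmodule ⊗[K] ↥(Bpos K A T Ap),
      phiMap h h1 (chiEquiv h h1 z * b) = ellMap h z * p0 h b := by
    intro z
    induction z with
    | zero => rw [map_zero, zero_mul, map_zero, map_zero, zero_mul]
    | tmul x c =>
      rw [chiEquiv_tmul, mul_assoc]
      have hcb : (c : A) * b ∈ Bpos K A T Ap := mul_mem_Bpos h c.2 hb
      rw [show (x : A) * ((c : A) * b) = (x : A) * ((⟨(c : A) * b, hcb⟩ : ↥(Bpos K A T Ap)) : A)
        from rfl]
      rw [phiMap_mul h h1, ellMap_tmul]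
      show p0 h (x : A) * p0 h ((c : A) * b) = p0 h (x : A) * p0 h (c : A) * p0 h b
      rw [p0_mul_Bpos h c.2 hb, mul_assoc]
    | add z w hz hw =>
      rw [map_add, add_mul, map_add, map_add, add_mul, hz, hw]
  have := key ((chiEquiv h h1).symm a)
  rwa [LinearEquiv.apply_symm_apply, show ellMap h ((chiEquiv h h1).symm a) = phiMap h h1 a
    from rfl] at this

lemma phiMap_Bpos (h : TriangularDecomposition K A 𝒜 Am T Ap) (h1 : (1 : A) ≠ 0)
    {b : A} (hb : b ∈ Bpos K A T Ap) : phiMap h h1 b = p0 h b := by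
  have h1m : (1 : A) ∈ Am.toSubmodule := (Subalgebra.mem_toSubmodule Am).mpr (one_mem Am)
  have := phiMap_mul h h1 ⟨1, h1m⟩ ⟨b, hb⟩
  simpa [p0_one h] using this

lemma phiMap_one (h : TriangularDecomposition K A 𝒜 Am T Ap) (h1 : (1 : A) ≠ 0) :
    phiMap h h1 (1 : A) = 1 := by
  rw [phiMap_Bpos h h1 one_mem_Bpos, p0_one h]

end Phi
section Iota
variable {K A : Type u} [Field K] [Ring A] [Algebra K A]
  {𝒜 : ℤ → Submodule K A} {Am T Ap : Subalgebra K A}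

/-- The map `B⁺ → T` given by the degree-0 projection. -/
noncomputable def piT (h : TriangularDecomposition K A 𝒜 Am T Ap) (b : A)
    (hb : b ∈ Bpos K A T Ap) : ↥T :=
  ⟨p0 h b, (Subalgebra.mem_toSubmodule T).mp (Bpos_decomp h hb).1⟩

/-- `ι` is injective, since the universal property maps `Δ̄(λ)` onto the
nonzero module `A ⊗_{B⁺} λ`. -/
lemma iota_injective (h : TriangularDecomposition K A 𝒜 Am T Ap) (h1 : (1 : A) ≠ 0)
    (M : Type u) [AddCommGroup M] [Module ↥T M]
    (D : Type u) [AddCommGroup D] [Module A D]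
    (ι : M →+ D) (hD : IsProperStandardFor K A 𝒜 T Ap M D ι) :
    Function.Injective ι := by
  classical
  letI : Module K M := Module.compHom M (algebraMap K ↥T)
  haveI hKs : ∀ (c : K) (m : M), c • m = (algebraMap K ↥T c) • m := fun c m => rfl
  haveI : IsScalarTower K ↥T M := ⟨fun c t m => by
    rw [hKs, Algebra.smul_def, mul_smul]⟩
  haveI : SMulCommClass K ↥T M := ⟨fun c t m => by
    rw [hKs, hKs, ← mul_smul, ← mul_smul, Algebra.commutes]⟩
  -- the K-bilinear action map
  set φT : A → ↥T := fun a =>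
    ⟨phiMap h h1 a, (Subalgebra.mem_toSubmodule T).mp (phiMap_mem_T h h1 a)⟩ with hφT
  have φT_add : ∀ a a', φT (a + a') = φT a + φT a' := fun a a' => Subtype.ext (map_add _ a a')
  have φT_smul : ∀ (c : K) a, φT (c • a) = c • φT a := fun c a => Subtype.ext (by
    show phiMap h h1 (c • a) = (c • φT a : ↥T)
    rw [map_smul]
    rfl)
  set g0 : A →ₗ[K] M →ₗ[K] M := LinearMap.mk₂ K (fun a m => φT a • m)
    (fun a a' m => by show φT (a + a') • m = φT a • m + φT a' • m; rw [φT_add, add_smul])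
    (fun c a m => by show φT (c • a) • m = c • (φT a • m); rw [φT_smul, smul_assoc])
    (fun a m m' => smul_add _ m m')
    (fun c a m => by show φT a • (c • m) = c • (φT a • m); exact smul_comm (φT a) c m ▸ (smul_comm c (φT a) m).symm) with hg0
  set g : (A ⊗[K] M) →ₗ[K] M := TensorProduct.lift g0 with hg
  have g_tmul : ∀ (a : A) (m : M), g (a ⊗ₜ[K] m) = φT a • m := fun a m => rfl
  -- the relation submodule
  set S : Set (A ⊗[K] M) := {z | ∃ (a b : A) (hb : b ∈ Bpos K A T Ap) (m : M),
    z = (a * b) ⊗ₜ[K] m - a ⊗ₜ[K] ((piT h b hb) • m)} with hS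
  have hstab : ∀ (a' : A) (z : A ⊗[K] M), z ∈ Submodule.span K S →
      a' • z ∈ Submodule.span K S := by
    intro a' z hz
    induction hz using Submodule.span_induction with
    | mem z hzS =>
      obtain ⟨a, b, hb, m, rfl⟩ := hzS
      apply Submodule.subset_span
      refine ⟨a' * a, b, hb, m, ?_⟩
      rw [smul_sub, TensorProduct.smul_tmul', TensorProduct.smul_tmul', smul_eq_mul,
        smul_eq_mul, mul_assoc]
    | zero => rw [smul_zero]; exact Submodule.zero_mem _
    | add x y _ _ hx hy => rw [smul_add]; exact Submodule.add_mem _ hx hy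
    | smul c x _ hx => rw [smul_comm]; exact Submodule.smul_mem _ _ hx
  set Rsub : Submodule A (A ⊗[K] M) :=
    { carrier := (Submodule.span K S : Set (A ⊗[K] M))
      add_mem' := fun ha hb => Submodule.add_mem _ ha hb
      zero_mem' := Submodule.zero_mem _
      smul_mem' := hstab } with hRsub
  have hRmem : ∀ z, z ∈ Rsub ↔ z ∈ Submodule.span K S := fun z => Iff.rfl
  -- g kills the relations
  have hgS : ∀ z ∈ Submodule.span K S, g z = 0 := by
    intro z hz
    induction hz using Submodule.span_induction with
    | mem z hzS =>
      obtain ⟨a, b, hb, m, rfl⟩ := hzS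
      rw [map_sub, g_tmul, g_tmul]
      have : φT (a * b) = φT a * (piT h b hb) := Subtype.ext (by
        show phiMap h h1 (a * b) = phiMap h h1 a * p0 h b
        exact phiMap_mul_Bpos h h1 a hb)
      rw [this, mul_smul, sub_self]
    | zero => exact map_zero g
    | add x y _ _ hx hy => rw [map_add, hx, hy, add_zero]
    | smul c x _ hx => rw [map_smul, hx, smul_zero]
  -- the induced module and the canonical map
  set N := (A ⊗[K] M) ⧸ Rsub with hN
  set f : M →+ N := AddMonoidHom.mk' (fun m => Submodule.Quotient.mk ((1 : A) ⊗ₜ[K] m))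
    (fun m m' => by
      show Submodule.Quotient.mk ((1 : A) ⊗ₜ[K] (m + m'))
          = Submodule.Quotient.mk ((1 : A) ⊗ₜ[K] m) + Submodule.Quotient.mk ((1 : A) ⊗ₜ[K] m')
      rw [TensorProduct.tmul_add, Submodule.Quotient.mk_add]) with hf
  have c1 : ∀ (t : ↥T) (m : M), f (t • m) = (t : A) • f m := by
    intro t m
    show Submodule.Quotient.mk ((1 : A) ⊗ₜ[K] (t • m))
        = (t : A) • Submodule.Quotient.mk ((1 : A) ⊗ₜ[K] m)
    rw [← Submodule.Quotient.mk_smul]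
    rw [(Submodule.Quotient.eq Rsub)]
    rw [hRmem]
    have htB : (t : A) ∈ Bpos K A T Ap := T_le_Bpos t.2
    have hpt : piT h (t : A) htB = t := Subtype.ext (p0_T h t.2)
    have hgen : ((1 : A) * (t : A)) ⊗ₜ[K] m - (1 : A) ⊗ₜ[K] ((piT h (t : A) htB) • m)
        ∈ Submodule.span K S := Submodule.subset_span ⟨1, (t : A), htB, m, rfl⟩
    have heq : (1 : A) ⊗ₜ[K] (t • m) - (t : A) • ((1 : A) ⊗ₜ[K] m)
        = -(((1 : A) * (t : A)) ⊗ₜ[K] m - (1 : A) ⊗ₜ[K] ((piT h (t : A) htB) • m)) := by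
      rw [hpt, one_mul, TensorProduct.smul_tmul', smul_eq_mul, mul_one]
      abel
    rw [heq]
    exact Submodule.neg_mem _ hgen
  have c2 : ∀ a ∈ Jpos K A 𝒜 T Ap, ∀ m : M, a • f m = 0 := by
    intro a ha m
    show a • Submodule.Quotient.mk ((1 : A) ⊗ₜ[K] m) = 0
    rw [← Submodule.Quotient.mk_smul, Submodule.Quotient.mk_eq_zero, hRmem]
    have haB : a ∈ Bpos K A T Ap := Jpos_le_Bpos ha
    have hpa : piT h a haB = 0 := Subtype.ext (p0_Jpos h ha)
    have hgen : a • ((1 : A) ⊗ₜ[K] m) ∈ S := by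
      refine ⟨1, a, haB, m, ?_⟩
      rw [hpa, zero_smul, TensorProduct.tmul_zero, sub_zero, one_mul,
        TensorProduct.smul_tmul', smul_eq_mul, mul_one]
    exact Submodule.subset_span hgen
  have hf0 : ∀ m : M, f m = 0 → m = 0 := by
    intro m hm
    have hmem : (1 : A) ⊗ₜ[K] m ∈ Submodule.span K S := by
      rw [← hRmem, ← Submodule.Quotient.mk_eq_zero]
      exact hm
    have := hgS _ hmem
    rw [g_tmul] at this
    have hφ1 : φT 1 = 1 := Subtype.ext (phiMap_one h h1)
    rw [hφ1, one_smul] at this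
    exact this
  obtain ⟨F, hF, _⟩ := hD.2.2 N f c1 c2
  intro m m' hmm
  have : f m = f m' := by rw [← hF, ← hF, hmm]
  have hsub : f (m - m') = 0 := by rw [map_sub, this, sub_self]
  have := hf0 _ hsub
  exact sub_eq_zero.mp this

end Iota

end TriangularPaper

namespace TriangularPaper

/-- Let `λ` be a simple graded `T`-module concentrated in degree `d`.
Then the proper standard module `Δ̄(λ)` has a simple head `L(λ)` (it has a unique
maximal `A`-submodule `rad`), the degree-`d` component of `L(λ) = Δ̄(λ)/rad` is
isomorphic to `λ` as a `T`-module, and `L(λ)` is supported in degrees `≤ d`. -/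
theorem properStandard_simple_head (K A : Type u) [Field K] [Ring A] [Algebra K A]
    [FiniteDimensional K A] (𝒜 : ℤ → Submodule K A) (Am T Ap : Subalgebra K A)
    (h : TriangularDecomposition K A 𝒜 Am T Ap)
    (d : ℤ) (M : Type u) [AddCommGroup M] [Module ↥T M] [IsSimpleModule ↥T M]
    (D : Type u) [AddCommGroup D] [Module A D] [Module K D] [IsScalarTower K A D]
    (ι : M →+ D) (hD : IsProperStandardFor K A 𝒜 T Ap M D ι)
    (ℳ : ℤ → Submodule K D) (hℳ : IsModuleGrading K A 𝒜 ℳ)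
    (hι : ∀ m : M, ι m ∈ ℳ d) :
    ∃ rad : Submodule A D,
      -- `rad` is the unique maximal submodule, so the head `L(λ) = Δ̄(λ)/rad` is simple
      rad ≠ ⊤ ∧ (∀ N : Submodule A D, N ≠ ⊤ → N ≤ rad) ∧
      -- the degree-`d` component of `L(λ)` is isomorphic to `λ` as a `T`-module
      (∃ e : M →+ (D ⧸ rad), Function.Injective e ∧
        (Set.range e = (rad.mkQ '' (ℳ d : Set D))) ∧
        ∀ (t : ↥T) (m : M), e (t • m) = (t : A) • e m) ∧
      -- `L(λ)` is supported in degrees `≤ d`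
      (∀ i : ℤ, d < i → rad.mkQ '' (ℳ i : Set D) = {0}) := by
  classical
  obtain ⟨hint, hcomp⟩ := hℳ
  -- M is nontrivial
  have hMnt : Nontrivial M := by
    by_contra hc
    have hsub : Subsingleton M := not_nontrivial_iff_subsingleton.mp hc
    have hbt : (⊥ : Submodule ↥T M) = ⊤ := by
      ext x; simp [Subsingleton.elim x 0]
    exact bot_ne_top hbt
  obtain ⟨m0, hm0⟩ := exists_ne (0 : M)
  -- A is nontrivial
  have h1 : (1 : A) ≠ 0 := by
    intro he
    have hT0 : (1 : ↥T) = 0 := Subtype.ext (by simpa using he)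
    apply hm0
    calc m0 = (1 : ↥T) • m0 := (one_smul _ _).symm
      _ = (0 : ↥T) • m0 := by rw [hT0]
      _ = 0 := zero_smul _ _
  have hinj : Function.Injective ι := iota_injective h h1 M D ι hD
  -- scalar commutation on D
  have hsc : ∀ (c : K) (a : A) (w : D), a • (c • w) = c • (a • w) := by
    intro c a w
    rw [← algebraMap_smul A c w, ← algebraMap_smul A c (a • w), ← mul_smul, ← mul_smul,
      Algebra.commutes]
  -- the action of B⁺ on the image of ι
  have bIota : ∀ (b : A) (hb : b ∈ Bpos K A T Ap) (m : M),
      b • ι m = ι ((piT h b hb) • m) := by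
    intro b hb m
    have e1 : ι ((piT h b hb) • m) = (p0 h b) • ι m := hD.1 _ m
    have e2 : (b - p0 h b) • ι m = 0 := hD.2.1 _ (Bpos_decomp h hb).2 m
    have : b • ι m = (p0 h b) • ι m + (b - p0 h b) • ι m := by
      rw [← add_smul, add_sub_cancel]
    rw [this, e2, add_zero, e1]
  -- K-scalars act through T on the image of ι
  have hrs : ∀ (c : K) (m : M), c • ι m = ι ((algebraMap K ↥T c) • m) := by
    intro c m
    have := hD.1 (algebraMap K ↥T c) m
    rw [this]
    show c • ι m = ((algebraMap K ↥T c : ↥T) : A) • ι m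
    rw [show ((algebraMap K ↥T c : ↥T) : A) = algebraMap K A c from rfl, algebraMap_smul]
  -- the image of ι as a K-submodule
  set rangeIota : Submodule K D :=
    { carrier := Set.range ⇑ι
      add_mem' := by
        rintro a b ⟨m, hm⟩ ⟨m', hm'⟩
        exact ⟨m + m', by rw [map_add, hm, hm']⟩
      zero_mem' := ⟨0, map_zero ι⟩
      smul_mem' := by
        rintro c x ⟨m, hm⟩
        exact ⟨(algebraMap K ↥T c) • m, by rw [← hrs, hm]⟩ }
    with hrangeIota
  -- D is generated by the image of ι
  have hDtop : Submodule.span A (Set.range ⇑ι) = ⊤ := by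
    set D' := Submodule.span A (Set.range ⇑ι) with hD'
    set f' : M →+ ↥D' :=
      { toFun := fun m => ⟨ι m, Submodule.subset_span (Set.mem_range_self m)⟩
        map_zero' := Subtype.ext (map_zero ι)
        map_add' := fun a b => Subtype.ext (map_add ι a b) } with hf'
    have c1 : ∀ (t : ↥T) (m : M), f' (t • m) = (t : A) • f' m :=
      fun t m => Subtype.ext (hD.1 t m)
    have c2 : ∀ a ∈ Jpos K A 𝒜 T Ap, ∀ m : M, a • f' m = 0 :=
      fun a ha m => Subtype.ext (hD.2.1 a ha m)
    obtain ⟨F, hF, _⟩ := hD.2.2 ↥D' f' c1 c2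
    obtain ⟨G, hG, hGuniq⟩ := hD.2.2 D ι hD.1 hD.2.1
    have e1 : D'.subtype ∘ₗ F = G := by
      apply hGuniq
      intro m
      rw [LinearMap.comp_apply, hF m]
      rfl
    have e2 : (LinearMap.id : D →ₗ[A] D) = G := hGuniq _ (fun m => rfl)
    rw [eq_top_iff]
    intro x _
    have : D'.subtype (F x) = x := by
      rw [← LinearMap.comp_apply, e1, ← e2]
      rfl
    exact this ▸ (F x).2
  -- generators of D adapted to the triangular decomposition
  set Sgen : Set D := {w | ∃ i : ℤ, i ≤ 0 ∧ ∃ x ∈ Am.toSubmodule ⊓ 𝒜 i, ∃ m : M, w = x • ι m}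
    with hSgen
  -- step a : A⁻ • ι(M) lands in the span of the generators
  have stepA : ∀ (x : A), x ∈ Am.toSubmodule → ∀ m : M, x • ι m ∈ Submodule.span K Sgen := by
    intro x hx m
    have hx' : x ∈ ⨆ i, Am.toSubmodule ⊓ 𝒜 i := by rw [← h.neg_graded]; exact hx
    clear hx
    induction hx' using Submodule.iSup_induction' with
    | mem i y hy =>
      rcases le_or_gt i 0 with hi | hi
      · exact Submodule.subset_span ⟨i, hi, y, hy, m, rfl⟩
      · rw [Am_piece_pos h hi hy.1 hy.2, zero_smul]
        exact Submodule.zero_mem _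
    | zero => rw [zero_smul]; exact Submodule.zero_mem _
    | add a b _ _ ha hb => rw [add_smul]; exact Submodule.add_mem _ ha hb
  -- step b : A • ι(M) lands in the span of the generators
  have stepB : ∀ (a : A) (m : M), a • ι m ∈ Submodule.span K Sgen := by
    intro a m
    have key : ∀ z : ↥Am.toSubmodule ⊗[K] ↥(Bpos K A T Ap),
        (chiEquiv h h1 z) • ι m ∈ Submodule.span K Sgen := by
      intro z
      induction z with
      | zero => rw [map_zero, zero_smul]; exact Submodule.zero_mem _
      | tmul x b =>
        rw [chiEquiv_tmul, mul_smul, bIota (b : A) b.2 m]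
        exact stepA (x : A) x.2 _
      | add z w hz hw => rw [map_add, add_smul]; exact Submodule.add_mem _ hz hw
    have := key ((chiEquiv h h1).symm a)
    rwa [LinearEquiv.apply_symm_apply] at this
  -- every element of D lies in the span of the generators
  have hW : ∀ z : D, z ∈ Submodule.span K Sgen := by
    have hDK : ∀ z : D, z ∈ Submodule.span K {w : D | ∃ (a : A) (m : M), w = a • ι m} := by
      intro z
      have hz : z ∈ Submodule.span A (Set.range ⇑ι) := hDtop ▸ Submodule.mem_top
      have hstab : ∀ (a : A) (w : D),
          w ∈ Submodule.span K {w : D | ∃ (a : A) (m : M), w = a • ι m} →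
          a • w ∈ Submodule.span K {w : D | ∃ (a : A) (m : M), w = a • ι m} := by
        intro a w hw
        induction hw using Submodule.span_induction with
        | mem w hwS =>
          obtain ⟨a', m, rfl⟩ := hwS
          exact Submodule.subset_span ⟨a * a', m, (mul_smul a a' (ι m)).symm⟩
        | zero => rw [smul_zero]; exact Submodule.zero_mem _
        | add u v _ _ hu hv => rw [smul_add]; exact Submodule.add_mem _ hu hv
        | smul c u _ hu => rw [hsc]; exact Submodule.smul_mem _ _ hu
      induction hz using Submodule.span_induction with
      | mem w hwS =>
        obtain ⟨m, rfl⟩ := hwS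
        exact Submodule.subset_span ⟨1, m, (one_smul A (ι m)).symm⟩
      | zero => exact Submodule.zero_mem _
      | add u v _ _ hu hv => exact Submodule.add_mem _ hu hv
      | smul a u _ hu => exact hstab a u hu
    intro z
    have hz := hDK z
    induction hz using Submodule.span_induction with
    | mem w hwS => obtain ⟨a, m, rfl⟩ := hwS; exact stepB a m
    | zero => exact Submodule.zero_mem _
    | add u v _ _ hu hv => exact Submodule.add_mem _ hu hv
    | smul c u _ hu => exact Submodule.smul_mem _ _ hu
  -- decomposing projections of elements of D
  have hproj : ∀ (j : ℤ) (z : D), proj ℳ hint j z ∈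
      Submodule.span K {w : D | ∃ x ∈ Am.toSubmodule ⊓ 𝒜 (j - d), ∃ m : M, w = x • ι m} := by
    intro j z
    have hz := hW z
    induction hz using Submodule.span_induction with
    | mem w hwS =>
      obtain ⟨i, hi, x, hx, m, rfl⟩ := hwS
      have hmem : x • ι m ∈ ℳ (i + d) := hcomp i d x (ι m) hx.2 (hι m)
      rcases eq_or_ne (i + d) j with hij | hij
      · subst hij
        rw [proj_of_mem ℳ hint hmem]
        refine Submodule.subset_span ⟨x, ?_, m, rfl⟩
        have hii : i + d - d = i := by omega
        rw [hii]
        exact hx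
      · rw [proj_of_mem_ne ℳ hint hij hmem]
        exact Submodule.zero_mem _
    | zero => rw [map_zero]; exact Submodule.zero_mem _
    | add u v _ _ hu hv => rw [map_add]; exact Submodule.add_mem _ hu hv
    | smul c u _ hu => rw [map_smul]; exact Submodule.smul_mem _ _ hu
  -- (M1) : the grading of D vanishes above degree d
  have M1 : ∀ j : ℤ, d < j → ℳ j = ⊥ := by
    intro j hj
    rw [eq_bot_iff]
    intro x hx
    have hx' : x = proj ℳ hint j x := (proj_of_mem ℳ hint hx).symm
    have hsp := hproj j x
    have hle : Submodule.span K {w : D | ∃ x ∈ Am.toSubmodule ⊓ 𝒜 (j - d), ∃ m : M, w = x • ι m}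
        ≤ ⊥ := by
      rw [Submodule.span_le]
      rintro w ⟨y, hy, m, rfl⟩
      have hpos : (0 : ℤ) < j - d := by omega
      rw [Am_piece_pos h hpos hy.1 hy.2, zero_smul]
      exact Submodule.zero_mem _
    rw [hx']
    exact hle hsp
  -- (M2) : the degree-d part of D is the image of ι
  have M2 : ∀ x ∈ ℳ d, x ∈ Set.range ⇑ι := by
    intro x hx
    have hx' : x = proj ℳ hint d x := (proj_of_mem ℳ hint hx).symm
    have hsp := hproj d x
    have hle : Submodule.span K {w : D | ∃ x ∈ Am.toSubmodule ⊓ 𝒜 (d - d), ∃ m : M, w = x • ι m}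
        ≤ rangeIota := by
      rw [Submodule.span_le]
      rintro w ⟨y, hy, m, rfl⟩
      have hy0 : y ∈ Am.toSubmodule ⊓ 𝒜 0 := by
        have hdd : d - d = 0 := by omega
        rw [hdd] at hy
        exact hy
      have hy1 : y ∈ Submodule.span K {(1 : A)} := h.neg_deg0 ▸ hy0
      obtain ⟨c, rfl⟩ := Submodule.mem_span_singleton.mp hy1
      have : (c • (1 : A)) • ι m = c • ι m := by
        rw [smul_assoc, one_smul]
      rw [this, hrs]
      exact ⟨_, rfl⟩
    rw [hx']
    exact hle hsp
  -- negative-degree pieces and the Nakayama filtration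
  set JDf : ℕ → Submodule K D := fun k =>
    Submodule.span K {w : D | ∃ a ∈ (Jneg K A 𝒜 Am T) ^ (k + 1), ∃ z : D, w = a • z}
    with hJDf
  have M3 : ∀ j : ℤ, j < d → ℳ j ≤ JDf 0 := by
    intro j hj x hx
    have hx' : x = proj ℳ hint j x := (proj_of_mem ℳ hint hx).symm
    have hsp := hproj j x
    have hle : Submodule.span K {w : D | ∃ x ∈ Am.toSubmodule ⊓ 𝒜 (j - d), ∃ m : M, w = x • ι m}
        ≤ JDf 0 := by
      rw [Submodule.span_le]
      rintro w ⟨y, hy, m, rfl⟩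
      have hyJ : y ∈ Jneg K A 𝒜 Am T :=
        negAmP_le_Jneg (Submodule.mem_iSup_of_mem (j - d)
          (by rw [iSup_pos (by omega : j - d < 0)]; exact hy))
      have hyJ' : y ∈ (Jneg K A 𝒜 Am T) ^ (0 + 1) := by
        rw [show (0 + 1 : ℕ) = 1 from rfl, pow_one]; exact hyJ
      exact Submodule.subset_span ⟨y, hyJ', ι m, rfl⟩
    rw [hx']
    exact hle hsp
  -- KEY : a submodule with nonzero degree-d projection is everything
  have hKEY : ∀ NN : Submodule A D, (∃ x ∈ NN, proj ℳ hint d x ≠ 0) → NN = ⊤ := by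
    intro NN ⟨x0, hx0N, hx0⟩
    -- the pullback of the degree-d projection of NN is a T-submodule of M
    set Msub : Submodule ↥T M :=
      { carrier := {m : M | ∃ n ∈ NN, proj ℳ hint d n = ι m}
        add_mem' := by
          rintro m m' ⟨n, hn, hn'⟩ ⟨k, hk, hk'⟩
          exact ⟨n + k, NN.add_mem hn hk, by rw [map_add, hn', hk', map_add]⟩
        zero_mem' := ⟨0, NN.zero_mem, by rw [map_zero, map_zero]⟩
        smul_mem' := by
          rintro t m ⟨n, hn, hn'⟩
          refine ⟨(t : A) • n, NN.smul_mem _ hn, ?_⟩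
          rw [proj_smul₀ ℳ hint 𝒜 hcomp (h.T_deg0 t.2), hn', ← hD.1] } with hMsub
    have hMne : Msub ≠ ⊥ := by
      intro hbot
      have hpx : proj ℳ hint d x0 ∈ ℳ d := proj_mem ℳ hint d x0
      obtain ⟨m, hm⟩ := M2 _ hpx
      have hmM : m ∈ Msub := ⟨x0, hx0N, hm.symm⟩
      rw [hbot] at hmM
      have : m = 0 := hmM
      rw [this, map_zero] at hm
      exact hx0 hm.symm
    have hMtop : Msub = ⊤ := (eq_bot_or_eq_top Msub).resolve_left hMne
    have hMall : ∀ m : M, ∃ n ∈ NN, proj ℳ hint d n = ι m := by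
      intro m
      have : m ∈ Msub := hMtop ▸ Submodule.mem_top
      exact this
    -- base case of the filtration
    have base : ∀ z : D, z ∈ NN.restrictScalars K ⊔ JDf 0 := by
      intro z
      have hz := hW z
      induction hz using Submodule.span_induction with
      | mem w hwS =>
        obtain ⟨i, hi, x, hx, m, rfl⟩ := hwS
        rcases lt_or_eq_of_le hi with hi' | hi'
        · refine Submodule.mem_sup_right (Submodule.subset_span ?_)
          have hxJ : x ∈ Jneg K A 𝒜 Am T :=
            negAmP_le_Jneg (Submodule.mem_iSup_of_mem i
              (by rw [iSup_pos hi']; exact hx))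
          exact ⟨x, by rw [show (0 + 1 : ℕ) = 1 from rfl, pow_one]; exact hxJ, ι m, rfl⟩
        · subst hi'
          have hx1 : x ∈ Submodule.span K {(1 : A)} := h.neg_deg0 ▸ hx
          obtain ⟨c, rfl⟩ := Submodule.mem_span_singleton.mp hx1
          have he : (c • (1 : A)) • ι m = c • ι m := by rw [smul_assoc, one_smul]
          rw [he]
          refine Submodule.smul_mem _ _ ?_
          obtain ⟨n, hn, hn'⟩ := hMall m
          have hdec : ι m = n - (n - proj ℳ hint d n) := by rw [hn']; abel
          rw [hdec]
          refine Submodule.sub_mem _ (Submodule.mem_sup_left hn) ?_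
          have hsub := sub_proj_mem ℳ hint d n
          have hle : (⨆ j, ⨆ (_ : j ≠ d), ℳ j) ≤ NN.restrictScalars K ⊔ JDf 0 := by
            refine iSup_le fun j => iSup_le fun hj => ?_
            rcases lt_or_gt_of_ne hj with hlt | hgt
            · exact le_trans (M3 j hlt) le_sup_right
            · rw [M1 j hgt]; exact bot_le
          exact hle hsub
      | zero => exact Submodule.zero_mem _
      | add u v _ _ hu hv => exact Submodule.add_mem _ hu hv
      | smul c u _ hu => exact Submodule.smul_mem _ _ hu
    -- inductive step of the filtration
    have step : ∀ k : ℕ, JDf k ≤ NN.restrictScalars K ⊔ JDf (k + 1) := by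
      intro k
      rw [hJDf]
      rw [Submodule.span_le]
      rintro w ⟨a, ha, z, rfl⟩
      obtain ⟨n, hn, w', hw', hnw⟩ := Submodule.mem_sup.mp (base z)
      rw [← hnw, smul_add]
      refine Submodule.add_mem _ (Submodule.mem_sup_left (NN.smul_mem a hn)) ?_
      have hkill : ∀ v : D, v ∈ JDf 0 → a • v ∈ JDf (k + 1) := by
        intro v hv
        induction hv using Submodule.span_induction with
        | mem w hwS =>
          obtain ⟨a', ha', z', rfl⟩ := hwS
          rw [← mul_smul]
          refine Submodule.subset_span ⟨a * a', ?_, z', rfl⟩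
          have := Submodule.mul_mem_mul ha ha'
          rw [show (0 + 1 : ℕ) = 1 from rfl, pow_one] at this
          rwa [← pow_succ] at this
        | zero => rw [smul_zero]; exact Submodule.zero_mem _
        | add u v _ _ hu hv => rw [smul_add]; exact Submodule.add_mem _ hu hv
        | smul c u _ hu => rw [hsc]; exact Submodule.smul_mem _ _ hu
      exact Submodule.mem_sup_right (hkill w' hw')
    have iter : ∀ k : ℕ, ∀ z : D, z ∈ NN.restrictScalars K ⊔ JDf k := by
      intro k
      induction k with
      | zero => exact base
      | succ n ih =>
        intro z
        have := ih z
        rcases Submodule.mem_sup.mp this with ⟨y, hy, w, hw, hyw⟩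
        rw [← hyw]
        exact Submodule.add_mem _ (Submodule.mem_sup_left hy) (step n hw)
    -- termination
    obtain ⟨nb, hnb⟩ := exists_grading_bound h
    have hJbot : JDf nb = ⊥ := by
      have hpow : (Jneg K A 𝒜 Am T) ^ (nb + 1) = ⊥ := by
        rw [eq_bot_iff]
        refine le_trans (Jneg_pow_le h nb) ?_
        refine iSup_le fun i => iSup_le fun hi => ?_
        rw [hnb i (by push_cast at hi ⊢; omega)]
      rw [hJDf, eq_bot_iff, Submodule.span_le]
      rintro w ⟨a, ha, z, rfl⟩
      rw [hpow] at ha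
      have : a = 0 := ha
      rw [this, zero_smul]
      exact Submodule.zero_mem _
    rw [eq_top_iff]
    intro z _
    have := iter nb z
    rw [hJbot, sup_bot_eq, Submodule.restrictScalars_mem] at this
    exact this
  -- the radical
  set rad : Submodule A D := sSup {N : Submodule A D | N ≠ ⊤} with hrad
  have hradProj : ∀ x ∈ rad, proj ℳ hint d x = 0 := by
    intro x hx
    rw [hrad, sSup_eq_iSup'] at hx
    induction hx using Submodule.iSup_induction' with
    | mem N y hy =>
      by_contra hne
      exact N.2 (hKEY N ⟨y, hy, hne⟩)
    | zero => exact map_zero _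
    | add u v _ _ hu hv => rw [map_add, hu, hv, add_zero]
  have hradne : rad ≠ ⊤ := by
    intro hc
    have : ι m0 ∈ rad := hc ▸ Submodule.mem_top
    have hz := hradProj _ this
    rw [proj_of_mem ℳ hint (hι m0)] at hz
    exact hm0 (hinj (by rw [hz, map_zero]))
  refine ⟨rad, hradne, fun N hN => le_sSup hN, ?_, ?_⟩
  · -- the embedding of M into the quotient
    set e : M →+ (D ⧸ rad) := (rad.mkQ.toAddMonoidHom).comp ι with he
    have heapp : ∀ m : M, e m = rad.mkQ (ι m) := fun m => rfl
    refine ⟨e, ?_, ?_, ?_⟩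
    · intro m m' hmm
      have : rad.mkQ (ι (m - m')) = 0 := by
        rw [map_sub, map_sub, ← heapp, ← heapp, hmm, sub_self]
      rw [Submodule.mkQ_apply, Submodule.Quotient.mk_eq_zero] at this
      have hz := hradProj _ this
      rw [proj_of_mem ℳ hint (hι (m - m'))] at hz
      have : m - m' = 0 := hinj (by rw [hz, map_zero])
      exact sub_eq_zero.mp this
    · have hrange : Set.range ⇑ι = (ℳ d : Set D) := by
        ext x
        exact ⟨fun ⟨m, hm⟩ => hm ▸ hι m, fun hx => M2 x hx⟩
      show Set.range (⇑rad.mkQ ∘ ⇑ι) = ⇑rad.mkQ '' (ℳ d : Set D)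
      rw [Set.range_comp, hrange]
    · intro t m
      rw [heapp, heapp, hD.1 t m, Submodule.mkQ_apply, Submodule.mkQ_apply,
        ← Submodule.Quotient.mk_smul]
  · intro i hi
    rw [M1 i hi]
    show ⇑rad.mkQ '' ((⊥ : Submodule K D) : Set D) = {0}
    rw [Submodule.bot_coe, Set.image_singleton, map_zero]

end TriangularPaper
end

section
/- Let A be a finite-dimensional Z-graded K-algebra with triangular decomposition (A⁻,T,A⁺). Then every simple A-module L(λ) is absolutely simple, i.e., End_A(L(λ)) = K; in particular A is a split K-algebra. -/
open scoped TensorProduct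

universe u

namespace TriangularPaper

private lemma triMulMap_tmul_s8 (K A : Type u) [Field K] [Ring A] [Algebra K A]
    (P Q R : Submodule K A) (p : P) (q : Q) (r : R) :
    triMulMap K A P Q R ((p ⊗ₜ q) ⊗ₜ r) = ((p : A) * (q : A)) * (r : A) := by
  simp [triMulMap, mulMap, LinearMap.mul'_apply]

/-- If `A` has a triangular decomposition (so in particular `T` is a
split `K`-algebra), then every simple `A`-module is absolutely simple:
`End_A(L(λ)) = K`.  In particular, `A` is a split `K`-algebra. -/
theorem simple_modules_absolutely_simple (K A : Type u) [Field K] [Ring A] [Algebra K A]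
    [FiniteDimensional K A] (𝒜 : ℤ → Submodule K A) (Am T Ap : Subalgebra K A)
    (h : TriangularDecomposition K A 𝒜 Am T Ap)
    (S : Type u) [AddCommGroup S] [Module A S] [IsSimpleModule A S]
    (f : S →ₗ[A] S) : ∃ c : K, ∀ x : S, f x = algebraMap K A c • x := by
  classical
  -- `S` as a `K`-module via `algebraMap K A`
  letI instKS : Module K S := Module.compHom S (algebraMap K A)
  have hks : ∀ (c : K) (x : S), c • x = algebraMap K A c • x := fun _ _ => rfl
  haveI : Nontrivial S := IsSimpleModule.nontrivial A S
  obtain ⟨v₀, hv₀⟩ := exists_ne (0 : S)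
  -- every nonzero vector generates S over A
  have hspan : ∀ v : S, v ≠ 0 → ∀ s : S, ∃ a : A, a • v = s := by
    intro v hv s
    have hne : Submodule.span A {v} ≠ ⊥ := by
      intro hb
      exact hv (by simpa [hb] using Submodule.mem_span_singleton_self (R := A) v)
    have : Submodule.span A {v} = ⊤ :=
      (eq_bot_or_eq_top (Submodule.span A {v})).resolve_left hne
    exact Submodule.mem_span_singleton.mp (this ▸ Submodule.mem_top)
  -- `S` is finite dimensional over `K`
  haveI hFD : FiniteDimensional K S := by
    let φ : A →ₗ[K] S :=
      { toFun := fun a => a • v₀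
        map_add' := fun a b => add_smul a b v₀
        map_smul' := fun k a => by
          simp only [RingHom.id_apply]
          rw [hks, Algebra.smul_def, mul_smul] }
    exact Module.Finite.of_surjective φ (fun s => hspan v₀ hv₀ s)
  -- independence of the grading
  have ind : iSupIndep 𝒜 := h.internal.submodule_iSupIndep
  have hzero : ∀ (p : ℤ → Prop) (i : ℤ), ¬ p i → ∀ x : A, x ∈ 𝒜 i →
      x ∈ (⨆ (j : ℤ) (_ : p j), 𝒜 j) → x = 0 := by
    intro p i hpi x hx1 hx2
    have hle : (⨆ (j : ℤ) (_ : p j), 𝒜 j) ≤ ⨆ (j : ℤ) (_ : j ≠ i), 𝒜 j :=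
      iSup₂_le fun j hj => le_iSup₂ (f := fun (j : ℤ) (_ : j ≠ i) => 𝒜 j) j
        (fun hji => hpi (hji ▸ hj))
    exact (Submodule.disjoint_def.mp (ind i)) x hx1 (hle hx2)
  -- boundedness of the support of the grading
  have hFfin : {i : ℤ | 𝒜 i ≠ ⊥}.Finite := by
    rw [← Set.finite_coe_iff]
    set F := {i : ℤ | 𝒜 i ≠ ⊥} with hF
    have hv : ∀ i : F, ∃ x ∈ 𝒜 i.1, x ≠ 0 := fun i => (Submodule.ne_bot_iff _).mp i.2
    choose v hv1 hv2 using hv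
    have li : LinearIndependent K v :=
      iSupIndep.linearIndependent (fun i : F => 𝒜 i.1) (ind.comp Subtype.val_injective) hv1 hv2
    exact li.finite
  obtain ⟨N₀, hN₀1, hN₀⟩ : ∃ N : ℕ, 1 ≤ N ∧ ∀ i : ℤ, 𝒜 i ≠ ⊥ → i.natAbs < N := by
    obtain ⟨B, hB⟩ := (hFfin.image Int.natAbs).bddAbove
    exact ⟨B + 1, by omega, fun i hi => by
      have := hB (Set.mem_image_of_mem _ hi); omega⟩
  -- the positive and negative parts of `A`
  set Pos : ℕ → Submodule K A := fun n => ⨆ i : {i : ℤ // (n : ℤ) ≤ i}, 𝒜 i with hPosdef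
  set Neg : ℕ → Submodule K A := fun n => ⨆ i : {i : ℤ // i ≤ -(n : ℤ)}, 𝒜 i with hNegdef
  have hPosIn : ∀ (n : ℕ) (i : ℤ), (n : ℤ) ≤ i → 𝒜 i ≤ Pos n := fun n i hi =>
    le_iSup (fun j : {i : ℤ // (n : ℤ) ≤ i} => 𝒜 j) ⟨i, hi⟩
  have hNegIn : ∀ (n : ℕ) (i : ℤ), i ≤ -(n : ℤ) → 𝒜 i ≤ Neg n := fun n i hi =>
    le_iSup (fun j : {i : ℤ // i ≤ -(n : ℤ)} => 𝒜 j) ⟨i, hi⟩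
  have hPosBot : Pos N₀ = ⊥ := by
    refine iSup_eq_bot.mpr fun i => ?_
    by_contra hne
    have h1 := hN₀ i.1 hne
    have h2 := i.2
    omega
  have hNegBot : Neg N₀ = ⊥ := by
    refine iSup_eq_bot.mpr fun i => ?_
    by_contra hne
    have h1 := hN₀ i.1 hne
    have h2 := i.2
    omega
  -- multiplicativity
  have hPosMul : ∀ (m n : ℕ) (a b : A), a ∈ Pos m → b ∈ Pos n → a * b ∈ Pos (m + n) := by
    intro m n a b ha hb
    refine Submodule.iSup_induction (p := fun i : {i : ℤ // (m : ℤ) ≤ i} => 𝒜 i)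
      (motive := fun a => a * b ∈ Pos (m + n)) ha ?_ (by simp) ?_
    · intro i x hx
      refine Submodule.iSup_induction (p := fun i : {i : ℤ // (n : ℤ) ≤ i} => 𝒜 i)
        (motive := fun b => x * b ∈ Pos (m + n)) hb ?_ (by simp) ?_
      · intro j y hy
        refine hPosIn _ _ ?_ (h.mul_mem i j x y hx hy)
        have h1 := i.2; have h2 := j.2; push_cast; omega
      · intro y z hy hz; rw [mul_add]; exact add_mem hy hz
    · intro x y hx hy; rw [add_mul]; exact add_mem hx hy
  have hNegMul : ∀ (m n : ℕ) (a b : A), a ∈ Neg m → b ∈ Neg n → a * b ∈ Neg (m + n) := by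
    intro m n a b ha hb
    refine Submodule.iSup_induction (p := fun i : {i : ℤ // i ≤ -(m : ℤ)} => 𝒜 i)
      (motive := fun a => a * b ∈ Neg (m + n)) ha ?_ (by simp) ?_
    · intro i x hx
      refine Submodule.iSup_induction (p := fun i : {i : ℤ // i ≤ -(n : ℤ)} => 𝒜 i)
        (motive := fun b => x * b ∈ Neg (m + n)) hb ?_ (by simp) ?_
      · intro j y hy
        refine hNegIn _ _ ?_ (h.mul_mem i j x y hx hy)
        have h1 := i.2; have h2 := j.2; push_cast; omega
      · intro y z hy hz; rw [mul_add]; exact add_mem hy hz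
    · intro x y hx hy; rw [add_mul]; exact add_mem hx hy
  have hPosT : ∀ (n : ℕ) (a t : A), a ∈ Pos n → t ∈ 𝒜 0 → a * t ∈ Pos n := by
    intro n a t ha ht
    refine Submodule.iSup_induction (p := fun i : {i : ℤ // (n : ℤ) ≤ i} => 𝒜 i)
      (motive := fun a => a * t ∈ Pos n) ha ?_ (by simp) ?_
    · intro i x hx
      have := h.mul_mem i 0 x t hx ht
      rw [add_zero] at this
      exact hPosIn _ _ i.2 this
    · intro x y hx hy; rw [add_mul]; exact add_mem hx hy
  have hTNeg : ∀ (n : ℕ) (t a : A), t ∈ 𝒜 0 → a ∈ Neg n → t * a ∈ Neg n := by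
    intro n t a ht ha
    refine Submodule.iSup_induction (p := fun i : {i : ℤ // i ≤ -(n : ℤ)} => 𝒜 i)
      (motive := fun a => t * a ∈ Neg n) ha ?_ (by simp) ?_
    · intro i x hx
      have := h.mul_mem 0 i t x ht hx
      rw [zero_add] at this
      exact hNegIn _ _ i.2 this
    · intro x y hx hy; rw [mul_add]; exact add_mem hx hy
  -- decompositions of `A⁺` and `A⁻`
  have hApdec : ∀ y : A, y ∈ Ap.toSubmodule → ∃ k : K, y - algebraMap K A k ∈ Pos 1 := by
    intro y hy
    rw [h.pos_graded] at hy
    refine Submodule.iSup_induction (p := fun i : ℤ => Ap.toSubmodule ⊓ 𝒜 i)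
      (motive := fun y => ∃ k : K, y - algebraMap K A k ∈ Pos 1) hy ?_ ⟨0, by simp⟩ ?_
    · intro i x hx
      rcases lt_trichotomy i 0 with hi | hi | hi
      · have hx0 : x = 0 := by
          refine hzero (fun j => ∃ n : ℕ, j = (n : ℤ)) i ?_ x hx.2 ?_
          · rintro ⟨n, rfl⟩; omega
          · have hle : (⨆ n : ℕ, 𝒜 (n : ℤ)) ≤ ⨆ (j : ℤ) (_ : ∃ n : ℕ, j = (n : ℤ)), 𝒜 j :=
              iSup_le fun n =>
                le_iSup₂ (f := fun (j : ℤ) (_ : ∃ n : ℕ, j = (n : ℤ)) => 𝒜 j) (n : ℤ) ⟨n, rfl⟩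
            exact hle (h.pos_supp hx.1)
        exact ⟨0, by simp [hx0]⟩
      · subst hi
        have hx' : x ∈ Submodule.span K {(1 : A)} := h.pos_deg0 ▸ hx
        obtain ⟨k, hk⟩ := Submodule.mem_span_singleton.mp hx'
        refine ⟨k, ?_⟩
        have : x = algebraMap K A k := by
          rw [← hk, Algebra.algebraMap_eq_smul_one]
        simp [this]
      · exact ⟨0, by simpa using hPosIn 1 i (by omega) hx.2⟩
    · rintro x y ⟨k1, h1⟩ ⟨k2, h2⟩
      refine ⟨k1 + k2, ?_⟩
      rw [map_add]
      convert add_mem h1 h2 using 1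
      abel
  have hAmdec : ∀ y : A, y ∈ Am.toSubmodule → ∃ k : K, y - algebraMap K A k ∈ Neg 1 := by
    intro y hy
    rw [h.neg_graded] at hy
    refine Submodule.iSup_induction (p := fun i : ℤ => Am.toSubmodule ⊓ 𝒜 i)
      (motive := fun y => ∃ k : K, y - algebraMap K A k ∈ Neg 1) hy ?_ ⟨0, by simp⟩ ?_
    · intro i x hx
      rcases lt_trichotomy i 0 with hi | hi | hi
      · exact ⟨0, by simpa using hNegIn 1 i (by omega) hx.2⟩
      · subst hi
        have hx' : x ∈ Submodule.span K {(1 : A)} := h.neg_deg0 ▸ hx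
        obtain ⟨k, hk⟩ := Submodule.mem_span_singleton.mp hx'
        refine ⟨k, ?_⟩
        have : x = algebraMap K A k := by
          rw [← hk, Algebra.algebraMap_eq_smul_one]
        simp [this]
      · have hx0 : x = 0 := by
          refine hzero (fun j => ∃ n : ℕ, j = -(n : ℤ)) i ?_ x hx.2 ?_
          · rintro ⟨n, hn⟩; omega
          · have hle : (⨆ n : ℕ, 𝒜 (-(n : ℤ))) ≤
                ⨆ (j : ℤ) (_ : ∃ n : ℕ, j = -(n : ℤ)), 𝒜 j :=
              iSup_le fun n =>
                le_iSup₂ (f := fun (j : ℤ) (_ : ∃ n : ℕ, j = -(n : ℤ)) => 𝒜 j) (-(n : ℤ))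
                  ⟨n, rfl⟩
            exact hle (h.neg_supp hx.1)
        exact ⟨0, by simp [hx0]⟩
    · rintro x y ⟨k1, h1⟩ ⟨k2, h2⟩
      refine ⟨k1 + k2, ?_⟩
      rw [map_add]
      convert add_mem h1 h2 using 1
      abel
  -- the submodule `D = A₋ • S`
  set D : Submodule K S :=
    Submodule.span K {z : S | ∃ a ∈ Neg 1, ∃ x : S, a • x = z} with hDdef
  have hDsmul0 : ∀ t : A, t ∈ 𝒜 0 → ∀ z ∈ D, t • z ∈ D := by
    intro t ht z hz
    refine Submodule.span_induction ?_ ?_ ?_ ?_ hz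
    · rintro z ⟨a, ha, x, rfl⟩
      exact Submodule.subset_span ⟨t * a, hTNeg 1 t a ht ha, x, mul_smul t a x⟩
    · simpa using D.zero_mem
    · intro x y _ _ hx hy
      rw [smul_add]; exact D.add_mem hx hy
    · intro k x _ hx
      have : t • (k • x) = k • (t • x) := by
        rw [hks, hks, ← mul_smul, ← mul_smul, Algebra.commutes k t]
      rw [this]
      exact D.smul_mem k hx
  have hDf : ∀ z ∈ D, f z ∈ D := by
    intro z hz
    refine Submodule.span_induction ?_ ?_ ?_ ?_ hz
    · rintro z ⟨a, ha, x, rfl⟩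
      rw [f.map_smul]
      exact Submodule.subset_span ⟨a, ha, f x, rfl⟩
    · simpa using D.zero_mem
    · intro x y _ _ hx hy
      rw [f.map_add]; exact D.add_mem hx hy
    · intro k x _ hx
      rw [hks, f.map_smul, ← hks]
      exact D.smul_mem k hx
  have hDneTop : D ≠ ⊤ := by
    intro hD
    set DW : ℕ → Submodule K S :=
      fun n => Submodule.span K {z : S | ∃ a ∈ Neg n, ∃ x : S, a • x = z} with hDWdef
    have hDW1 : DW 1 = ⊤ := hD
    have hall : ∀ n, 1 ≤ n → DW n = ⊤ := by
      intro n hn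
      induction n, hn using Nat.le_induction with
      | base => exact hDW1
      | succ n hn ih =>
        rw [eq_top_iff]
        intro s _
        have hs : s ∈ DW 1 := hDW1 ▸ Submodule.mem_top
        refine Submodule.span_induction ?_ ?_ ?_ ?_ hs
        · rintro z ⟨a, ha, x, rfl⟩
          have hx : x ∈ DW n := ih ▸ Submodule.mem_top
          refine Submodule.span_induction ?_ ?_ ?_ ?_ hx
          · rintro w ⟨b, hb, y, rfl⟩
            refine Submodule.subset_span ⟨a * b, ?_, y, mul_smul a b y⟩
            have := hNegMul 1 n a b ha hb
            rwa [Nat.add_comm] at this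
          · simpa using (DW (n + 1)).zero_mem
          · intro w1 w2 _ _ h1 h2
            rw [smul_add]; exact add_mem h1 h2
          · intro k w _ hw
            have : a • (k • w) = k • (a • w) := by
              rw [hks, hks, ← mul_smul, ← mul_smul, Algebra.commutes k a]
            rw [this]
            exact Submodule.smul_mem _ k hw
        · exact Submodule.zero_mem _
        · intro x y _ _ hx hy; exact add_mem hx hy
        · intro k x _ hx; exact Submodule.smul_mem _ k hx
    have hbot : DW N₀ ≤ ⊥ := by
      rw [Submodule.span_le]
      rintro z ⟨a, ha, x, rfl⟩
      rw [hNegBot] at ha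
      simp only [Submodule.mem_bot] at ha
      simp [ha]
    have := hbot (hall N₀ hN₀1 ▸ Submodule.mem_top (x := v₀))
    exact hv₀ (by simpa using this)
  obtain ⟨s₀, hs₀⟩ : ∃ s : S, s ∉ D := by
    by_contra hc
    push_neg at hc
    exact hDneTop (Submodule.eq_top_iff'.mpr hc)
  -- the highest weight space `M`
  set M : Submodule K S :=
    { carrier := {x : S | ∀ a ∈ Pos 1, a • x = 0}
      zero_mem' := fun a _ => smul_zero a
      add_mem' := fun hx hy a ha => by
        rw [smul_add, hx a ha, hy a ha, add_zero]
      smul_mem' := fun k x hx a ha => by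
        have : a • (k • x) = k • (a • x) := by
          rw [hks, hks, ← mul_smul, ← mul_smul, Algebra.commutes k a]
        rw [this, hx a ha, smul_zero] } with hMdef
  have hMmem : ∀ x : S, x ∈ M ↔ ∀ a ∈ Pos 1, a • x = 0 := fun x => Iff.rfl
  have hMne : M ≠ ⊥ := by
    intro hM
    have hcon : ∀ x : S, x ≠ 0 → ∃ a ∈ Pos 1, a • x ≠ 0 := by
      intro x hx
      by_contra hya
      push_neg at hya
      exact hx (by
        have : x ∈ M := (hMmem x).mpr hya
        rwa [hM, Submodule.mem_bot] at this)
    set W : ℕ → Submodule K S :=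
      fun n => Submodule.span K {z : S | ∃ a ∈ Pos n, ∃ x : S, a • x = z} with hWdef
    have hWne : ∀ n, 1 ≤ n → W n ≠ ⊥ := by
      intro n hn
      induction n, hn using Nat.le_induction with
      | base =>
        obtain ⟨a, ha, hax⟩ := hcon v₀ hv₀
        exact (Submodule.ne_bot_iff _).mpr
          ⟨a • v₀, Submodule.subset_span ⟨a, ha, v₀, rfl⟩, hax⟩
      | succ n hn ih =>
        obtain ⟨w, hw, hw0⟩ := (Submodule.ne_bot_iff _).mp ih
        obtain ⟨a, ha, haw⟩ := hcon w hw0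
        refine (Submodule.ne_bot_iff _).mpr ⟨a • w, ?_, haw⟩
        refine Submodule.span_induction ?_ ?_ ?_ ?_ hw
        · rintro z ⟨b, hb, y, rfl⟩
          refine Submodule.subset_span ⟨a * b, ?_, y, mul_smul a b y⟩
          have := hPosMul 1 n a b ha hb
          rwa [Nat.add_comm] at this
        · simpa using (W (n + 1)).zero_mem
        · intro w1 w2 _ _ h1 h2
          rw [smul_add]; exact add_mem h1 h2
        · intro k w' _ hw'
          have : a • (k • w') = k • (a • w') := by
            rw [hks, hks, ← mul_smul, ← mul_smul, Algebra.commutes k a]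
          rw [this]
          exact Submodule.smul_mem _ k hw'
    refine hWne N₀ hN₀1 ?_
    rw [eq_bot_iff, Submodule.span_le]
    rintro z ⟨a, ha, x, rfl⟩
    rw [hPosBot] at ha
    simp only [Submodule.mem_bot] at ha
    simp [ha]
  have hMT : ∀ t : A, t ∈ T → ∀ x ∈ M, t • x ∈ M := by
    intro t ht x hx
    intro a ha
    have : a • (t • x) = (a * t) • x := (mul_smul a t x).symm
    rw [this]
    exact hx _ (hPosT 1 a t ha (h.T_deg0 ht))
  -- a minimal nonzero `T`-stable subspace of `M`
  set Sc : Set (Submodule K S) :=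
    {N | N ≠ ⊥ ∧ N ≤ M ∧ ∀ t : A, t ∈ T → ∀ x ∈ N, t • x ∈ N} with hScdef
  have hScM : M ∈ Sc := ⟨hMne, le_rfl, hMT⟩
  have hranksne : ((fun N : Submodule K S => Module.finrank K N) '' Sc).Nonempty :=
    ⟨_, ⟨M, hScM, rfl⟩⟩
  obtain ⟨lam, hlamS, hlamrank⟩ := Nat.sInf_mem hranksne
  have hmin : ∀ N ∈ Sc, Module.finrank K lam ≤ Module.finrank K N := by
    intro N hN
    have hlamrank' : Module.finrank K lam =
        sInf ((fun N : Submodule K S => Module.finrank K N) '' Sc) := hlamrank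
    rw [hlamrank']
    exact Nat.sInf_le ⟨N, hN, rfl⟩
  obtain ⟨hlamne, hlamM, hlamT⟩ := hlamS
  obtain ⟨v, hvlam, hvne⟩ := (Submodule.ne_bot_iff lam).mp hlamne
  -- `S = lam + D`
  have hsum : ∀ s : S, ∃ x ∈ lam, s - x ∈ D := by
    intro s
    obtain ⟨a, rfl⟩ := hspan v hvne s
    have key : ∀ ξ : ((↥Am.toSubmodule ⊗[K] ↥T.toSubmodule) ⊗[K] ↥Ap.toSubmodule),
        ∃ x ∈ lam,
          (triMulMap K A Am.toSubmodule T.toSubmodule Ap.toSubmodule ξ) • v - x ∈ D := by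
      intro ξ
      induction ξ using TensorProduct.induction_on with
      | zero =>
        refine ⟨0, lam.zero_mem, ?_⟩
        rw [LinearMap.map_zero, zero_smul, sub_zero]
        exact D.zero_mem
      | add ξ η hξ hη =>
        obtain ⟨x1, hx1, hd1⟩ := hξ
        obtain ⟨x2, hx2, hd2⟩ := hη
        refine ⟨x1 + x2, add_mem hx1 hx2, ?_⟩
        rw [LinearMap.map_add, add_smul]
        convert D.add_mem hd1 hd2 using 1
        abel
      | tmul ζ y =>
        induction ζ using TensorProduct.induction_on with
        | zero =>
          rw [TensorProduct.zero_tmul, LinearMap.map_zero]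
          exact ⟨0, lam.zero_mem, by simp⟩
        | add ζ1 ζ2 h1 h2 =>
          obtain ⟨x1, hx1, hd1⟩ := h1
          obtain ⟨x2, hx2, hd2⟩ := h2
          refine ⟨x1 + x2, add_mem hx1 hx2, ?_⟩
          rw [TensorProduct.add_tmul, LinearMap.map_add, add_smul]
          convert D.add_mem hd1 hd2 using 1
          abel
        | tmul p q =>
          rw [triMulMap_tmul_s8]
          obtain ⟨k, hk⟩ := hApdec (y : A) y.2
          have hyv : (y : A) • v ∈ lam := by
            have hy0 : ((y : A) - algebraMap K A k) • v = 0 :=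
              (hlamM hvlam) _ hk
            have : (y : A) • v = algebraMap K A k • v := by
              have := sub_smul ((y : A)) (algebraMap K A k) v
              rw [hy0] at this
              have := this.symm
              rw [sub_eq_zero] at this
              exact this
            rw [this]
            exact hlamT _ (T.algebraMap_mem k) v hvlam
          have hv₂ : (q : A) • ((y : A) • v) ∈ lam := hlamT _ q.2 _ hyv
          set v₂ := (q : A) • ((y : A) • v) with hv₂def
          obtain ⟨k', hk'⟩ := hAmdec (p : A) p.2
          refine ⟨algebraMap K A k' • v₂, hlamT _ (T.algebraMap_mem k') _ hv₂, ?_⟩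
          have heq : ((p : A) * (q : A) * (y : A)) • v = (p : A) • v₂ := by
            rw [mul_assoc, mul_smul, mul_smul]
          rw [heq, ← sub_smul]
          exact Submodule.subset_span ⟨_, hk', v₂, rfl⟩
    obtain ⟨ξ, hξ⟩ := h.mul_bij.2 a
    rw [← hξ]
    exact key ξ
  -- the quotient `V = S / D` as a `T`-module
  set V := S ⧸ D with hVdef
  let ℓ : ↥T → (S →ₗ[K] S) := fun t =>
    { toFun := fun x => (t : A) • x
      map_add' := fun x y => smul_add _ x y
      map_smul' := fun k x => by
        simp only [RingHom.id_apply]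
        rw [hks, hks, ← mul_smul, ← mul_smul, Algebra.commutes k (t : A)] }
  let qmap : ↥T → (V →ₗ[K] V) := fun t =>
    Submodule.mapQ D D (ℓ t) (fun z hz => hDsmul0 (t : A) (h.T_deg0 t.2) z hz)
  have hqmk : ∀ (t : ↥T) (x : S),
      qmap t (Submodule.Quotient.mk x) = Submodule.Quotient.mk ((t : A) • x) :=
    fun t x => rfl
  letI : SMul ↥T V := ⟨fun t v => qmap t v⟩
  have hsmulmk : ∀ (t : ↥T) (x : S),
      t • (Submodule.Quotient.mk x : V) = Submodule.Quotient.mk ((t : A) • x) := hqmk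
  letI : MulAction ↥T V :=
    { one_smul := by
        intro v
        obtain ⟨x, rfl⟩ := Submodule.Quotient.mk_surjective D v
        rw [hsmulmk]
        norm_num
      mul_smul := by
        intro t s v
        obtain ⟨x, rfl⟩ := Submodule.Quotient.mk_surjective D v
        rw [hsmulmk, hsmulmk, hsmulmk]
        congr 1
        push_cast
        rw [mul_smul] }
  letI : DistribMulAction ↥T V :=
    { smul_zero := fun t => map_zero (qmap t)
      smul_add := fun t v w => map_add (qmap t) v w }
  letI : Module ↥T V :=
    { add_smul := by
        intro t s v
        obtain ⟨x, rfl⟩ := Submodule.Quotient.mk_surjective D v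
        rw [hsmulmk, hsmulmk, hsmulmk]
        push_cast
        rw [add_smul]
        rfl
      zero_smul := by
        intro v
        obtain ⟨x, rfl⟩ := Submodule.Quotient.mk_surjective D v
        rw [hsmulmk]
        push_cast
        rw [zero_smul]
        rfl }
  haveI hVnontriv : Nontrivial V := by
    refine ⟨Submodule.Quotient.mk s₀, 0, ?_⟩
    rw [Ne, Submodule.Quotient.mk_eq_zero]
    exact hs₀
  have hVsimple : IsSimpleModule ↥T V := by
    refine { eq_bot_or_eq_top := fun U => ?_ }
    by_cases hU : U = ⊥
    · exact Or.inl hU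
    right
    obtain ⟨u, huU, hu0⟩ := (Submodule.ne_bot_iff U).mp hU
    set lamU : Submodule K S :=
      { carrier := {x : S | x ∈ lam ∧ (Submodule.Quotient.mk x : V) ∈ U}
        zero_mem' := ⟨lam.zero_mem, by
          have : (Submodule.Quotient.mk (0 : S) : V) = 0 := by simp
          rw [this]; exact U.zero_mem⟩
        add_mem' := fun {x} {y} hx hy => ⟨add_mem hx.1 hy.1, by
          have : (Submodule.Quotient.mk (x + y) : V) =
              Submodule.Quotient.mk x + Submodule.Quotient.mk y := by
            simp [Submodule.Quotient.mk_add]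
          rw [this]; exact U.add_mem hx.2 hy.2⟩
        smul_mem' := fun k x hx => ⟨lam.smul_mem k hx.1, by
          have : (Submodule.Quotient.mk (k • x) : V) =
              (⟨algebraMap K A k, T.algebraMap_mem k⟩ : ↥T) •
                (Submodule.Quotient.mk x : V) := by
            rw [hsmulmk]
            rfl
          rw [this]
          exact U.smul_mem _ hx.2⟩ } with hlamUdef
    have hlamUmem : ∀ x : S,
        x ∈ lamU ↔ x ∈ lam ∧ (Submodule.Quotient.mk x : V) ∈ U := fun x => Iff.rfl
    have hlamUT : ∀ t : A, t ∈ T → ∀ x ∈ lamU, t • x ∈ lamU := by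
      intro t ht x hx
      refine ⟨hlamT t ht x hx.1, ?_⟩
      have : (Submodule.Quotient.mk (t • x) : V) =
          (⟨t, ht⟩ : ↥T) • (Submodule.Quotient.mk x : V) := (hsmulmk ⟨t, ht⟩ x).symm
      rw [this]
      exact U.smul_mem _ hx.2
    have hlamUne : lamU ≠ ⊥ := by
      obtain ⟨su, rfl⟩ := Submodule.Quotient.mk_surjective D u
      obtain ⟨xu, hxu, hdu⟩ := hsum su
      have hmkeq : (Submodule.Quotient.mk su : V) = Submodule.Quotient.mk xu :=
        (Submodule.Quotient.eq D).mpr hdu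
      refine (Submodule.ne_bot_iff _).mpr ⟨xu, ⟨hxu, hmkeq ▸ huU⟩, ?_⟩
      intro hxu0
      apply hu0
      rw [hmkeq, hxu0]
      simp
    have hlamUS : lamU ∈ Sc := ⟨hlamUne, fun x hx => hlamM hx.1, hlamUT⟩
    have hle : lamU ≤ lam := fun x hx => hx.1
    have heq : lamU = lam := Submodule.eq_of_le_of_finrank_le hle (hmin _ hlamUS)
    rw [eq_top_iff]
    rintro w -
    obtain ⟨sw, rfl⟩ := Submodule.Quotient.mk_surjective D w
    obtain ⟨xw, hxw, hdw⟩ := hsum sw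
    have hmkeq : (Submodule.Quotient.mk sw : V) = Submodule.Quotient.mk xw :=
      (Submodule.Quotient.eq D).mpr hdw
    rw [hmkeq]
    have : xw ∈ lamU := heq ▸ hxw
    exact this.2
  -- the induced endomorphism of `V`
  let fK : S →ₗ[K] S :=
    { toFun := f
      map_add' := f.map_add
      map_smul' := fun k x => by
        simp only [RingHom.id_apply]
        rw [hks, f.map_smul, ← hks] }
  let fq : V →ₗ[K] V := Submodule.mapQ D D fK (fun z hz => hDf z hz)
  have hfqmk : ∀ x : S,
      fq (Submodule.Quotient.mk x) = Submodule.Quotient.mk (f x) :=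
    fun x => rfl
  let fbar : V →ₗ[↥T] V :=
    { toFun := fq
      map_add' := fq.map_add
      map_smul' := by
        intro t v
        obtain ⟨x, rfl⟩ := Submodule.Quotient.mk_surjective D v
        simp only [RingHom.id_apply]
        rw [hsmulmk, hfqmk, hfqmk, hsmulmk, f.map_smul] }
  obtain ⟨c, hc⟩ := h.T_split V hVsimple fbar
  have hfinal : ∀ x : S, f x - algebraMap K A c • x ∈ D := by
    intro x
    have hx := hc (Submodule.Quotient.mk x)
    have h1 : fbar (Submodule.Quotient.mk x) = Submodule.Quotient.mk (f x) := hfqmk x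
    have h2 : algebraMap K ↥T c • (Submodule.Quotient.mk x : V) =
        Submodule.Quotient.mk (algebraMap K A c • x) := by
      rw [hsmulmk]
      congr 1
    rw [h1, h2] at hx
    exact (Submodule.Quotient.eq D).mp hx
  -- Schur's lemma
  let g : S →ₗ[A] S :=
    { toFun := fun x => f x - algebraMap K A c • x
      map_add' := by
        intro x y
        rw [f.map_add, smul_add]
        abel
      map_smul' := by
        intro a x
        dsimp only [RingHom.id_apply]
        rw [f.map_smul, smul_sub]
        congr 1
        rw [← mul_smul, ← mul_smul, Algebra.commutes c a] }
  rcases eq_bot_or_eq_top (LinearMap.range g) with hr | hr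
  · refine ⟨c, fun x => ?_⟩
    have : g x ∈ (⊥ : Submodule A S) := hr ▸ LinearMap.mem_range_self g x
    have hg0 : g x = 0 := by simpa using this
    have : f x - algebraMap K A c • x = 0 := hg0
    exact sub_eq_zero.mp this
  · exfalso
    have : s₀ ∈ LinearMap.range g := hr ▸ Submodule.mem_top
    obtain ⟨x, hx⟩ := this
    exact hs₀ (hx ▸ hfinal x)

end TriangularPaper
end

section
/- Let A be a finite-dimensional Z-graded K-algebra and Φ : A → K a linear map vanishing on Aᵢ for all i ≠ d. Then the kernel of Φ contains no nonzero left ideal of A if and only if it contains no nonzero graded left ideal of A. -/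
universe u

/-- Let `A` be a finite-dimensional `ℤ`-graded `K`-algebra and
`Φ : A → K` a linear map vanishing on `Aᵢ` for all `i ≠ d`.  Then the kernel of `Φ`
contains no nonzero left ideal of `A` if and only if it contains no nonzero *graded*
left ideal of `A`. -/
theorem graded_frobenius_check (K A : Type u) [Field K] [Ring A] [Algebra K A]
    [FiniteDimensional K A] (𝒜 : ℤ → Submodule K A) [GradedAlgebra 𝒜]
    (d : ℤ) (Φ : A →ₗ[K] K) (hΦ : ∀ i : ℤ, i ≠ d → ∀ a ∈ 𝒜 i, Φ a = 0) :
    (∀ I : Submodule A A, I ≠ ⊥ → ¬ (I : Set A) ⊆ {a | Φ a = 0}) ↔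
    (∀ I : Submodule A A,
      (Submodule.restrictScalars K I = ⨆ i : ℤ, Submodule.restrictScalars K I ⊓ 𝒜 i) →
      I ≠ ⊥ → ¬ (I : Set A) ⊆ {a | Φ a = 0}) := by
  constructor
  · intro H I _ hne
    exact H I hne
  · intro H I hne hsub
    classical
    obtain ⟨a, haI, ha0⟩ := Submodule.exists_mem_ne_zero_of_ne_bot hne
    -- find a nonzero homogeneous component of `a`
    obtain ⟨i, hi⟩ : ∃ i, (DirectSum.decompose 𝒜 a i : A) ≠ 0 := by
      by_contra hc
      push_neg at hc
      apply ha0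
      rw [← DirectSum.sum_support_decompose 𝒜 a]
      exact Finset.sum_eq_zero fun j _ => hc j
    set h : A := (DirectSum.decompose 𝒜 a i : A) with hh
    have hmem : h ∈ 𝒜 i := SetLike.coe_mem _
    have hsupp : i ∈ (DirectSum.decompose 𝒜 a).support := by
      rw [DFinsupp.mem_support_iff]
      intro e
      exact hi (by rw [hh, e, ZeroMemClass.coe_zero])
    -- key: Φ vanishes on z * h for z of degree d - i
    have key : ∀ z ∈ 𝒜 (d - i), Φ (z * h) = 0 := by
      intro z hz
      have hza : Φ (z * a) = 0 := by
        have := hsub (I.smul_mem z haI)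
        simpa [smul_eq_mul] using this
      have expand : z * a = ∑ k ∈ (DirectSum.decompose 𝒜 a).support,
          z * (DirectSum.decompose 𝒜 a k : A) := by
        rw [← Finset.mul_sum, DirectSum.sum_support_decompose]
      rw [expand, map_sum] at hza
      rw [← hza]
      symm
      refine Finset.sum_eq_single_of_mem i hsupp ?_
      intro k _ hk
      exact hΦ (d - i + k) (by omega) _
        (SetLike.mul_mem_graded hz (SetLike.coe_mem _))
    -- hence Φ vanishes on y * h for all y
    have keyall : ∀ y : A, Φ (y * h) = 0 := by
      intro y
      have expand : y * h = ∑ j ∈ (DirectSum.decompose 𝒜 y).support,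
          (DirectSum.decompose 𝒜 y j : A) * h := by
        rw [← Finset.sum_mul, DirectSum.sum_support_decompose]
      rw [expand, map_sum]
      refine Finset.sum_eq_zero fun j _ => ?_
      by_cases hj : j = d - i
      · exact key _ (hj ▸ SetLike.coe_mem _)
      · exact hΦ (j + i) (by omega) _
          (SetLike.mul_mem_graded (SetLike.coe_mem _) hmem)
    -- the graded left ideal generated by h
    set J : Submodule A A := Submodule.span A {h} with hJ
    have hJsub : (J : Set A) ⊆ {a | Φ a = 0} := by
      intro x hx
      obtain ⟨y, rfl⟩ := Submodule.mem_span_singleton.1 hx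
      simpa [smul_eq_mul] using keyall y
    have hJne : J ≠ ⊥ := by
      intro hE
      apply hi
      have hmemJ : h ∈ J := Submodule.mem_span_singleton_self h
      rw [hE] at hmemJ
      simpa using hmemJ
    have hgr : Submodule.restrictScalars K J =
        ⨆ k : ℤ, Submodule.restrictScalars K J ⊓ 𝒜 k := by
      apply le_antisymm
      · intro x hx
        rw [Submodule.restrictScalars_mem] at hx
        obtain ⟨y, rfl⟩ := Submodule.mem_span_singleton.1 hx
        rw [smul_eq_mul]
        have expand : y * h = ∑ j ∈ (DirectSum.decompose 𝒜 y).support,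
            (DirectSum.decompose 𝒜 y j : A) * h := by
          rw [← Finset.sum_mul, DirectSum.sum_support_decompose]
        rw [expand]
        refine Submodule.sum_mem _ fun j _ => ?_
        refine Submodule.mem_iSup_of_mem (j + i)
          (Submodule.mem_inf.2 ⟨?_, SetLike.mul_mem_graded (SetLike.coe_mem _) hmem⟩)
        rw [Submodule.restrictScalars_mem]
        have hy : (DirectSum.decompose 𝒜 y j : A) • h ∈ J :=
          Submodule.smul_mem J _ (Submodule.mem_span_singleton_self h)
        simpa [smul_eq_mul] using hy
      · exact iSup_le fun k => inf_le_left
    exact H J hgr hJne hJsub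
end

section
/- Let A = K⟨x,y⟩/⟨x², yx, y²⟩ with deg x = −1, deg y = 1. Then (K[x]/(x²), K, K[y]/(y²)) is a triangular decomposition of A (the multiplication map K[x]/(x²) ⊗ K ⊗ K[y]/(y²) → A is an isomorphism), but the opposite-order multiplication map K[y]/(y²) ⊗ K ⊗ K[x]/(x²) → A is not injective, since y ⊗ 1 ⊗ x maps to yx = 0. -/
open scoped TensorProduct

universe u

namespace Stmt16

variable (K : Type u) [Field K]

noncomputable def x : FreeAlgebra K Bool := FreeAlgebra.ι K false
noncomputable def y : FreeAlgebra K Bool := FreeAlgebra.ι K true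

/-- The relations `x² = yx = y² = 0`. -/
inductive Rel : FreeAlgebra K Bool → FreeAlgebra K Bool → Prop
  | xx : Rel (x K * x K) 0
  | yx : Rel (y K * x K) 0
  | yy : Rel (y K * y K) 0

/-- The algebra `A = K⟨x,y⟩/⟨x², yx, y²⟩`. -/
abbrev Aq := RingQuot (Rel K)

noncomputable def ξ : Aq K := RingQuot.mkAlgHom K (Rel K) (x K)
noncomputable def η : Aq K := RingQuot.mkAlgHom K (Rel K) (y K)

/-- The subalgebra `K[x]/(x²)`. -/
noncomputable def Am : Subalgebra K (Aq K) := Algebra.adjoin K {ξ K}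
/-- The subalgebra `K[y]/(y²)`. -/
noncomputable def Ap : Subalgebra K (Aq K) := Algebra.adjoin K {η K}

/-- The grading of `A` with `deg x = -1`, `deg y = 1` (so `A₋₁ = Kx`, `A₀ = K1 ⊕ Kxy`,
`A₁ = Ky`). -/
noncomputable def grading : ℤ → Submodule K (Aq K) := fun i =>
  if i = -1 then Submodule.span K {ξ K}
  else if i = 0 then Submodule.span K {(1 : Aq K), ξ K * η K}
  else if i = 1 then Submodule.span K {η K}
  else ⊥

open Matrix in
/-- Representation of `A` on 3×3 matrices: `x ↦ E₁₂`, `y ↦ E₂₃`. -/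
noncomputable def φ : Aq K →ₐ[K] Matrix (Fin 3) (Fin 3) K :=
  RingQuot.liftAlgHom K ⟨FreeAlgebra.lift K
      (fun b => if b then single 1 2 (1:K) else single 0 1 (1:K)),
    by
      rintro a b (h|h|h) <;> simp only [x, y, _root_.map_mul, _root_.map_zero,
        FreeAlgebra.lift_ι_apply, if_true, if_false, Bool.false_eq_true] <;>
      (apply Matrix.single_mul_single_of_ne; decide)⟩

open Matrix

lemma φ_ξ : φ K (ξ K) = single 0 1 (1:K) := by
  simp [φ, ξ, x, RingQuot.liftAlgHom_mkAlgHom_apply]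

lemma φ_η : φ K (η K) = single 1 2 (1:K) := by
  simp [φ, η, y, RingQuot.liftAlgHom_mkAlgHom_apply]

lemma xx0 : ξ K * ξ K = 0 := by
  have h := RingQuot.mkAlgHom_rel K (Rel.xx (K := K))
  simpa [ξ, _root_.map_mul] using h

lemma yx0 : η K * ξ K = 0 := by
  have h := RingQuot.mkAlgHom_rel K (Rel.yx (K := K))
  simpa [ξ, η, _root_.map_mul] using h

lemma yy0 : η K * η K = 0 := by
  have h := RingQuot.mkAlgHom_rel K (Rel.yy (K := K))
  simpa [η, _root_.map_mul] using h

lemma xex : ξ K * (ξ K * η K) = 0 := by rw [← mul_assoc, xx0, zero_mul]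
lemma yex : η K * (ξ K * η K) = 0 := by rw [← mul_assoc, yx0, zero_mul]
lemma exx : (ξ K * η K) * ξ K = 0 := by rw [mul_assoc, yx0, mul_zero]
lemma exy : (ξ K * η K) * η K = 0 := by rw [mul_assoc, yy0, mul_zero]
lemma exex : (ξ K * η K) * (ξ K * η K) = 0 := by rw [mul_assoc, yex, mul_zero]

lemma φ_ξη : φ K (ξ K * η K) = single 0 2 (1:K) := by
  rw [_root_.map_mul, φ_ξ, φ_η, Matrix.single_mul_single_same, one_mul]

/-- The `(i,j)` matrix coefficient of `φ`, as a linear functional. -/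
noncomputable def coord (i j : Fin 3) : Aq K →ₗ[K] K where
  toFun v := φ K v i j
  map_add' a b := by simp [_root_.map_add]
  map_smul' r a := by simp [_root_.map_smul]

lemma coord_apply (i j : Fin 3) (v : Aq K) : coord K i j v = φ K v i j := rfl

lemma coord_comb (i j : Fin 3) (a b c d : K) :
    coord K i j (a • (1 : Aq K) + b • ξ K + c • η K + d • (ξ K * η K)) =
      a * (1 : Matrix (Fin 3) (Fin 3) K) i j + b * single 0 1 (1:K) i j
        + c * single 1 2 (1:K) i j + d * single 0 2 (1:K) i j := by
  simp [coord_apply, _root_.map_add, _root_.map_smul, φ_ξ, φ_η, φ_ξη, Matrix.add_apply,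
    Matrix.smul_apply, smul_eq_mul, _root_.map_one]

lemma coord_eval (a b c d : K) :
    coord K 0 0 (a • (1 : Aq K) + b • ξ K + c • η K + d • (ξ K * η K)) = a ∧
    coord K 0 1 (a • (1 : Aq K) + b • ξ K + c • η K + d • (ξ K * η K)) = b ∧
    coord K 1 2 (a • (1 : Aq K) + b • ξ K + c • η K + d • (ξ K * η K)) = c ∧
    coord K 0 2 (a • (1 : Aq K) + b • ξ K + c • η K + d • (ξ K * η K)) = d := by
  refine ⟨?_, ?_, ?_, ?_⟩ <;>
    rw [coord_comb] <;>
    simp [Matrix.one_apply, Matrix.single, Matrix.of_apply]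

/-- The basis vectors `1, x, y, xy` of `A`. -/
noncomputable def vs : Fin 4 → Aq K := ![1, ξ K, η K, ξ K * η K]

lemma comb_eq (g : Fin 4 → K) :
    ∑ i, g i • vs K i =
      g 0 • (1 : Aq K) + g 1 • ξ K + g 2 • η K + g 3 • (ξ K * η K) := by
  simp [vs, Fin.sum_univ_four, add_assoc]

lemma vs_li : LinearIndependent K (vs K) := by
  rw [Fintype.linearIndependent_iff]
  intro g hg
  rw [comb_eq] at hg
  obtain ⟨h0, h1, h2, h3⟩ := coord_eval K (g 0) (g 1) (g 2) (g 3)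
  rw [hg] at h0 h1 h2 h3
  simp only [_root_.map_zero] at h0 h1 h2 h3
  intro i
  fin_cases i <;> simp [← h0, ← h1, ← h2, ← h3]

lemma mul_closed : ∀ a b : Aq K, a ∈ Submodule.span K (Set.range (vs K)) →
    b ∈ Submodule.span K (Set.range (vs K)) → a * b ∈ Submodule.span K (Set.range (vs K)) := by
  have hr : Set.range (vs K) = {1, ξ K, η K, ξ K * η K} := by
    ext z
    constructor
    · rintro ⟨i, rfl⟩; fin_cases i <;> simp [vs]
    · rintro (rfl|rfl|rfl|rfl)
      exacts [⟨0, rfl⟩, ⟨1, rfl⟩, ⟨2, rfl⟩, ⟨3, rfl⟩]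
  intro a b ha hb
  rw [hr] at ha hb ⊢
  induction hb using Submodule.span_induction with
  | mem z hz =>
    induction ha using Submodule.span_induction with
    | mem w hw =>
      rcases hw with rfl|rfl|rfl|rfl <;> rcases hz with rfl|rfl|rfl|rfl <;>
        (try simp only [one_mul, mul_one, xx0, yx0, yy0, xex, yex, exx, exy, exex]) <;>
        first
          | exact Submodule.zero_mem _
          | exact Submodule.subset_span (by simp)
    | zero => simpa using Submodule.zero_mem _
    | add u v hu hv ihu ihv => rw [add_mul]; exact Submodule.add_mem _ ihu ihv
    | smul r u hu ihu => rw [smul_mul_assoc]; exact Submodule.smul_mem _ _ ihu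
  | zero => simpa using Submodule.zero_mem _
  | add u v hu hv ihu ihv => rw [mul_add]; exact Submodule.add_mem _ ihu ihv
  | smul r u hu ihu => rw [mul_smul_comm]; exact Submodule.smul_mem _ _ ihu

lemma adjoin_top : Algebra.adjoin K {ξ K, η K} = ⊤ := by
  have hset : {ξ K, η K} = ⇑(RingQuot.mkAlgHom K (Rel K)) '' Set.range (FreeAlgebra.ι K) := by
    ext z
    constructor
    · rintro (rfl|rfl)
      · exact ⟨FreeAlgebra.ι K false, ⟨false, rfl⟩, rfl⟩
      · exact ⟨FreeAlgebra.ι K true, ⟨true, rfl⟩, rfl⟩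
    · rintro ⟨w, ⟨b, rfl⟩, rfl⟩
      cases b
      · exact Or.inl rfl
      · exact Or.inr rfl
  rw [hset, ← AlgHom.map_adjoin, FreeAlgebra.adjoin_range_ι, Algebra.map_top,
    AlgHom.range_eq_top]
  exact RingQuot.mkAlgHom_surjective K _

lemma vs_span : Submodule.span K (Set.range (vs K)) = ⊤ := by
  rw [eq_top_iff]
  have key : ∀ v, v ∈ Algebra.adjoin K {ξ K, η K} →
      v ∈ Submodule.span K (Set.range (vs K)) := by
    intro v hv
    induction hv using Algebra.adjoin_induction with
    | mem z hz =>
      rcases hz with rfl|rfl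
      · exact Submodule.subset_span ⟨1, rfl⟩
      · exact Submodule.subset_span ⟨2, rfl⟩
    | algebraMap r =>
      have : (algebraMap K (Aq K)) r = r • (1 : Aq K) := Algebra.algebraMap_eq_smul_one r
      rw [this]
      exact Submodule.smul_mem _ _ (Submodule.subset_span ⟨0, rfl⟩)
    | add u w hu hw ihu ihw => exact Submodule.add_mem _ ihu ihw
    | mul u w hu hw ihu ihw => exact mul_closed K u w ihu ihw
  intro v _
  exact key v (by rw [adjoin_top]; trivial)

/-- The basis `(1, x, y, xy)` of `A`. -/
noncomputable def b4 : Module.Basis (Fin 4) K (Aq K) := Module.Basis.mk (vs_li K) (by rw [vs_span])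

lemma gN : grading K (-1) = Submodule.span K {ξ K} := by simp [grading]
lemma g0 : grading K 0 = Submodule.span K {(1 : Aq K), ξ K * η K} := by norm_num [grading]
lemma gP : grading K 1 = Submodule.span K {η K} := by norm_num [grading]
lemma gother (i : ℤ) (h1 : i ≠ -1) (h2 : i ≠ 0) (h3 : i ≠ 1) : grading K i = ⊥ := by
  simp [grading, h1, h2, h3]

lemma range2 {α : Type u} (a b : α) : Set.range ![a, b] = {a, b} := by
  ext z
  constructor
  · rintro ⟨i, rfl⟩; fin_cases i <;> simp
  · rintro (rfl|rfl)
    exacts [⟨0, rfl⟩, ⟨1, rfl⟩]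

lemma range1 {α : Type u} (a : α) : Set.range ![a] = {a} := by
  ext z
  constructor
  · rintro ⟨i, rfl⟩; fin_cases i <;> simp
  · rintro rfl; exact ⟨0, rfl⟩

lemma AmS : Subalgebra.toSubmodule (Am K) = Submodule.span K (Set.range ![(1 : Aq K), ξ K]) := by
  rw [range2]
  apply le_antisymm
  · intro v hv
    rw [Subalgebra.mem_toSubmodule, Am] at hv
    induction hv using Algebra.adjoin_induction with
    | mem z hz =>
      rcases hz with rfl
      exact Submodule.subset_span (Or.inr rfl)
    | algebraMap r =>
      rw [Algebra.algebraMap_eq_smul_one]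
      exact Submodule.smul_mem _ _ (Submodule.subset_span (Or.inl rfl))
    | add u w hu hw ihu ihw => exact Submodule.add_mem _ ihu ihw
    | mul u w hu hw ihu ihw =>
      rw [Submodule.mem_span_pair] at ihu ihw
      obtain ⟨p, q, rfl⟩ := ihu
      obtain ⟨r, s, rfl⟩ := ihw
      rw [Submodule.mem_span_pair]
      refine ⟨p * r, p * s + q * r, ?_⟩
      simp only [add_mul, mul_add, smul_mul_assoc, mul_smul_comm, one_mul, mul_one, xx0,
        smul_zero, add_zero, smul_smul, add_smul]
      module
  · rw [Submodule.span_le]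
    rintro z (rfl|rfl)
    · exact (Am K).one_mem
    · exact Algebra.subset_adjoin rfl

lemma ApS : Subalgebra.toSubmodule (Ap K) = Submodule.span K (Set.range ![(1 : Aq K), η K]) := by
  rw [range2]
  apply le_antisymm
  · intro v hv
    rw [Subalgebra.mem_toSubmodule, Ap] at hv
    induction hv using Algebra.adjoin_induction with
    | mem z hz =>
      rcases hz with rfl
      exact Submodule.subset_span (Or.inr rfl)
    | algebraMap r =>
      rw [Algebra.algebraMap_eq_smul_one]
      exact Submodule.smul_mem _ _ (Submodule.subset_span (Or.inl rfl))
    | add u w hu hw ihu ihw => exact Submodule.add_mem _ ihu ihw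
    | mul u w hu hw ihu ihw =>
      rw [Submodule.mem_span_pair] at ihu ihw
      obtain ⟨p, q, rfl⟩ := ihu
      obtain ⟨r, s, rfl⟩ := ihw
      rw [Submodule.mem_span_pair]
      refine ⟨p * r, p * s + q * r, ?_⟩
      simp only [add_mul, mul_add, smul_mul_assoc, mul_smul_comm, one_mul, mul_one, yy0,
        smul_zero, add_zero, smul_smul, add_smul]
      module
  · rw [Submodule.span_le]
    rintro z (rfl|rfl)
    · exact (Ap K).one_mem
    · exact Algebra.subset_adjoin rfl

lemma TS : Subalgebra.toSubmodule (⊥ : Subalgebra K (Aq K)) =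
    Submodule.span K (Set.range ![(1 : Aq K)]) := by
  rw [range1, Algebra.toSubmodule_bot, Submodule.one_eq_span]

lemma liAm : LinearIndependent K ![(1 : Aq K), ξ K] := by
  rw [Fintype.linearIndependent_iff]
  intro g hg
  have h : g 0 • (1 : Aq K) + g 1 • ξ K + (0:K) • η K + (0:K) • (ξ K * η K) = 0 := by
    simpa [Fin.sum_univ_two] using hg
  obtain ⟨h0, h1, -, -⟩ := coord_eval K (g 0) (g 1) 0 0
  rw [h] at h0 h1
  simp only [_root_.map_zero] at h0 h1
  intro i; fin_cases i <;> simp [← h0, ← h1]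

lemma liAp : LinearIndependent K ![(1 : Aq K), η K] := by
  rw [Fintype.linearIndependent_iff]
  intro g hg
  have h : g 0 • (1 : Aq K) + (0:K) • ξ K + g 1 • η K + (0:K) • (ξ K * η K) = 0 := by
    simpa [Fin.sum_univ_two] using hg
  obtain ⟨h0, -, h1, -⟩ := coord_eval K (g 0) 0 (g 1) 0
  rw [h] at h0 h1
  simp only [_root_.map_zero] at h0 h1
  intro i; fin_cases i <;> simp [← h0, ← h1]

lemma liT : LinearIndependent K ![(1 : Aq K)] := by
  rw [Fintype.linearIndependent_iff]
  intro g hg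
  have h : g 0 • (1 : Aq K) + (0:K) • ξ K + (0:K) • η K + (0:K) • (ξ K * η K) = 0 := by
    simpa using hg
  obtain ⟨h0, -, -, -⟩ := coord_eval K (g 0) 0 0 0
  rw [h] at h0
  simp only [_root_.map_zero] at h0
  intro i; fin_cases i <;> simp [← h0]

noncomputable def bAm : Module.Basis (Fin 2) K ↥(Subalgebra.toSubmodule (Am K)) :=
  (Module.Basis.span (liAm K)).map (LinearEquiv.ofEq _ _ (AmS K).symm)

noncomputable def bAp : Module.Basis (Fin 2) K ↥(Subalgebra.toSubmodule (Ap K)) :=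
  (Module.Basis.span (liAp K)).map (LinearEquiv.ofEq _ _ (ApS K).symm)

noncomputable def bT : Module.Basis (Fin 1) K ↥(Subalgebra.toSubmodule (⊥ : Subalgebra K (Aq K))) :=
  (Module.Basis.span (liT K)).map (LinearEquiv.ofEq _ _ (TS K).symm)

lemma bAm_coe (i : Fin 2) : (bAm K i : Aq K) = ![(1 : Aq K), ξ K] i := by
  simp [bAm, Module.Basis.span_apply]

lemma bAp_coe (i : Fin 2) : (bAp K i : Aq K) = ![(1 : Aq K), η K] i := by
  simp [bAp, Module.Basis.span_apply]

lemma bT_coe (i : Fin 1) : (bT K i : Aq K) = 1 := by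
  simp [bT, Module.Basis.span_apply]

noncomputable def bD : Module.Basis ((Fin 2 × Fin 1) × Fin 2) K
    ((↥(Subalgebra.toSubmodule (Am K)) ⊗[K]
        ↥(Subalgebra.toSubmodule (⊥ : Subalgebra K (Aq K)))) ⊗[K]
      ↥(Subalgebra.toSubmodule (Ap K))) :=
  ((bAm K).tensorProduct (bT K)).tensorProduct (bAp K)

noncomputable def eIdx' : (Fin 2 × Fin 1) × Fin 2 ≃ Fin 4 :=
  Equiv.ofBijective (fun p => ![![0, 2], ![1, 3]] p.1.1 p.2) (by decide)

lemma tri_eq : TriangularPaper.triMulMap K (Aq K) (Subalgebra.toSubmodule (Am K))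
      (Subalgebra.toSubmodule (⊥ : Subalgebra K (Aq K))) (Subalgebra.toSubmodule (Ap K)) =
    ((bD K).equiv (b4 K) eIdx').toLinearMap := by
  apply (bD K).ext
  rintro ⟨⟨i, k⟩, j⟩
  have hRHS : ((bD K).equiv (b4 K) eIdx').toLinearMap ((bD K) ((i, k), j)) =
      b4 K (eIdx' ((i, k), j)) := by
    rw [LinearEquiv.coe_toLinearMap, Module.Basis.equiv_apply]
  rw [hRHS, show (bD K) ((i, k), j) = ((bAm K i ⊗ₜ[K] bT K k) ⊗ₜ[K] bAp K j) by
    simp [bD, Module.Basis.tensorProduct_apply]]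
  simp only [TriangularPaper.triMulMap, TriangularPaper.mulMap, LinearMap.coe_comp,
    Function.comp_apply, TensorProduct.map_tmul, LinearMap.mul'_apply, Submodule.coe_subtype]
  rw [bAm_coe, bAp_coe, bT_coe, b4, Module.Basis.mk_apply]
  fin_cases i <;> fin_cases j <;> fin_cases k <;>
    simp [eIdx', vs, mul_one, one_mul]

lemma tri_bij : Function.Bijective (TriangularPaper.triMulMap K (Aq K)
    (Subalgebra.toSubmodule (Am K)) (Subalgebra.toSubmodule (⊥ : Subalgebra K (Aq K)))
    (Subalgebra.toSubmodule (Ap K))) := by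
  rw [tri_eq]
  exact ((bD K).equiv (b4 K) eIdx').bijective

lemma c00_one : coord K 0 0 (1 : Aq K) = 1 := by simpa using (coord_eval K 1 0 0 0).1
lemma c00_ξ : coord K 0 0 (ξ K) = 0 := by simpa using (coord_eval K 0 1 0 0).1
lemma c00_η : coord K 0 0 (η K) = 0 := by simpa using (coord_eval K 0 0 1 0).1
lemma c00_e : coord K 0 0 (ξ K * η K) = 0 := by simpa using (coord_eval K 0 0 0 1).1
lemma c01_one : coord K 0 1 (1 : Aq K) = 0 := by simpa using (coord_eval K 1 0 0 0).2.1
lemma c01_ξ : coord K 0 1 (ξ K) = 1 := by simpa using (coord_eval K 0 1 0 0).2.1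
lemma c01_η : coord K 0 1 (η K) = 0 := by simpa using (coord_eval K 0 0 1 0).2.1
lemma c01_e : coord K 0 1 (ξ K * η K) = 0 := by simpa using (coord_eval K 0 0 0 1).2.1
lemma c12_one : coord K 1 2 (1 : Aq K) = 0 := by simpa using (coord_eval K 1 0 0 0).2.2.1
lemma c12_ξ : coord K 1 2 (ξ K) = 0 := by simpa using (coord_eval K 0 1 0 0).2.2.1
lemma c12_η : coord K 1 2 (η K) = 1 := by simpa using (coord_eval K 0 0 1 0).2.2.1
lemma c12_e : coord K 1 2 (ξ K * η K) = 0 := by simpa using (coord_eval K 0 0 0 1).2.2.1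
lemma c02_one : coord K 0 2 (1 : Aq K) = 0 := by simpa using (coord_eval K 1 0 0 0).2.2.2
lemma c02_ξ : coord K 0 2 (ξ K) = 0 := by simpa using (coord_eval K 0 1 0 0).2.2.2
lemma c02_η : coord K 0 2 (η K) = 0 := by simpa using (coord_eval K 0 0 1 0).2.2.2
lemma c02_e : coord K 0 2 (ξ K * η K) = 1 := by simpa using (coord_eval K 0 0 0 1).2.2.2

lemma tri_int (m : ℤ) : m = -1 ∨ m = 0 ∨ m = 1 ∨ (m ≠ -1 ∧ m ≠ 0 ∧ m ≠ 1) := by omega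

lemma grading_indep : iSupIndep (grading K) := by
  rw [iSupIndep_def]
  intro i
  rcases tri_int i with hi|hi|hi|⟨h1, h2, h3⟩
  · subst hi
    have hle : (⨆ j, ⨆ (_ : j ≠ (-1 : ℤ)), grading K j) ≤
        Submodule.span K {(1 : Aq K), η K, ξ K * η K} := by
      refine iSup₂_le fun j hj => ?_
      rcases tri_int j with hj'|hj'|hj'|⟨g1, g2, g3⟩
      · exact absurd hj' hj
      · subst hj'
        rw [g0, Submodule.span_le]
        rintro z (rfl|rfl)
        · exact Submodule.subset_span (by simp)
        · exact Submodule.subset_span (by simp)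
      · subst hj'
        rw [gP, Submodule.span_le]
        rintro z rfl
        exact Submodule.subset_span (by simp)
      · rw [gother K j g1 g2 g3]; exact bot_le
    rw [Submodule.disjoint_def]
    intro v hv hv'
    rw [gN, Submodule.mem_span_singleton] at hv
    obtain ⟨r, rfl⟩ := hv
    have hker : Submodule.span K {(1 : Aq K), η K, ξ K * η K} ≤
        LinearMap.ker (coord K 0 1) := by
      rw [Submodule.span_le]
      rintro z (rfl|rfl|rfl) <;>
        simp [LinearMap.mem_ker, c01_one, c01_η, c01_e]
    have h0 : coord K 0 1 (r • ξ K) = 0 := hker (hle hv')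
    rw [_root_.map_smul, c01_ξ, smul_eq_mul, mul_one] at h0
    rw [h0, zero_smul]
  · subst hi
    have hle : (⨆ j, ⨆ (_ : j ≠ (0 : ℤ)), grading K j) ≤
        Submodule.span K {ξ K, η K} := by
      refine iSup₂_le fun j hj => ?_
      rcases tri_int j with hj'|hj'|hj'|⟨g1, g2, g3⟩
      · subst hj'
        rw [gN, Submodule.span_le]
        rintro z rfl
        exact Submodule.subset_span (by simp)
      · exact absurd hj' hj
      · subst hj'
        rw [gP, Submodule.span_le]
        rintro z rfl
        exact Submodule.subset_span (by simp)
      · rw [gother K j g1 g2 g3]; exact bot_le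
    rw [Submodule.disjoint_def]
    intro v hv hv'
    rw [g0, Submodule.mem_span_pair] at hv
    obtain ⟨r, s, rfl⟩ := hv
    have hker0 : Submodule.span K {ξ K, η K} ≤ LinearMap.ker (coord K 0 0) := by
      rw [Submodule.span_le]
      rintro z (rfl|rfl) <;> simp [LinearMap.mem_ker, c00_ξ, c00_η]
    have hker2 : Submodule.span K {ξ K, η K} ≤ LinearMap.ker (coord K 0 2) := by
      rw [Submodule.span_le]
      rintro z (rfl|rfl) <;> simp [LinearMap.mem_ker, c02_ξ, c02_η]
    have h0 : coord K 0 0 (r • (1 : Aq K) + s • (ξ K * η K)) = 0 := hker0 (hle hv')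
    have h2 : coord K 0 2 (r • (1 : Aq K) + s • (ξ K * η K)) = 0 := hker2 (hle hv')
    rw [_root_.map_add, _root_.map_smul, _root_.map_smul, c00_one, c00_e, smul_eq_mul,
      smul_eq_mul, mul_one, mul_zero, add_zero] at h0
    rw [_root_.map_add, _root_.map_smul, _root_.map_smul, c02_one, c02_e, smul_eq_mul,
      smul_eq_mul, mul_one, mul_zero, zero_add] at h2
    rw [h0, h2, zero_smul, zero_smul, add_zero]
  · subst hi
    have hle : (⨆ j, ⨆ (_ : j ≠ (1 : ℤ)), grading K j) ≤
        Submodule.span K {(1 : Aq K), ξ K, ξ K * η K} := by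
      refine iSup₂_le fun j hj => ?_
      rcases tri_int j with hj'|hj'|hj'|⟨g1, g2, g3⟩
      · subst hj'
        rw [gN, Submodule.span_le]
        rintro z rfl
        exact Submodule.subset_span (by simp)
      · subst hj'
        rw [g0, Submodule.span_le]
        rintro z (rfl|rfl)
        · exact Submodule.subset_span (by simp)
        · exact Submodule.subset_span (by simp)
      · exact absurd hj' hj
      · rw [gother K j g1 g2 g3]; exact bot_le
    rw [Submodule.disjoint_def]
    intro v hv hv'
    rw [gP, Submodule.mem_span_singleton] at hv
    obtain ⟨r, rfl⟩ := hv
    have hker : Submodule.span K {(1 : Aq K), ξ K, ξ K * η K} ≤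
        LinearMap.ker (coord K 1 2) := by
      rw [Submodule.span_le]
      rintro z (rfl|rfl|rfl) <;>
        simp [LinearMap.mem_ker, c12_one, c12_ξ, c12_e]
    have h0 : coord K 1 2 (r • η K) = 0 := hker (hle hv')
    rw [_root_.map_smul, c12_η, smul_eq_mul, mul_one] at h0
    rw [h0, zero_smul]
  · rw [gother K i h1 h2 h3]
    exact disjoint_bot_left

lemma grading_sup : (⨆ i, grading K i) = ⊤ := by
  rw [eq_top_iff, ← vs_span K, Submodule.span_le]
  rintro z ⟨i, rfl⟩
  fin_cases i
  · exact Submodule.mem_iSup_of_mem 0 (by rw [g0]; exact Submodule.subset_span (by simp [vs]))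
  · exact Submodule.mem_iSup_of_mem (-1) (by rw [gN]; exact Submodule.subset_span rfl)
  · exact Submodule.mem_iSup_of_mem 1 (by rw [gP]; exact Submodule.subset_span rfl)
  · exact Submodule.mem_iSup_of_mem 0 (by rw [g0]; exact Submodule.subset_span (by simp [vs]))

lemma grading_internal : DirectSum.IsInternal (grading K) := by
  rw [DirectSum.isInternal_submodule_iff_iSupIndep_and_iSup_eq_top]
  exact ⟨grading_indep K, grading_sup K⟩

lemma grading_mul_mem : ∀ i j : ℤ, ∀ a b : Aq K,
    a ∈ grading K i → b ∈ grading K j → a * b ∈ grading K (i + j) := by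
  intro i j a b ha hb
  have hbot : ∀ m n : ℤ, ∀ u w : Aq K, w = 0 → u * w ∈ grading K (m + n) := by
    intro m n u w hw; rw [hw, mul_zero]; exact zero_mem _
  have hbot' : ∀ m n : ℤ, ∀ u w : Aq K, u = 0 → u * w ∈ grading K (m + n) := by
    intro m n u w hu; rw [hu, zero_mul]; exact zero_mem _
  rcases tri_int i with hi|hi|hi|⟨h1, h2, h3⟩
  rotate_right
  · rw [gother K i h1 h2 h3, Submodule.mem_bot] at ha
    exact hbot' i j a b ha
  all_goals subst hi
  all_goals rcases tri_int j with hj|hj|hj|⟨g1, g2, g3⟩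
  rotate_left 3
  · rw [gother K j g1 g2 g3, Submodule.mem_bot] at hb
    exact hbot _ j a b hb
  rotate_left 3
  · rw [gother K j g1 g2 g3, Submodule.mem_bot] at hb
    exact hbot _ j a b hb
  rotate_left 3
  · rw [gother K j g1 g2 g3, Submodule.mem_bot] at hb
    exact hbot _ j a b hb
  all_goals subst hj

  · -- (-1, -1)
    rw [gN, Submodule.mem_span_singleton] at ha hb
    obtain ⟨r, rfl⟩ := ha; obtain ⟨s, rfl⟩ := hb
    simp only [smul_mul_assoc, mul_smul_comm, xx0, smul_zero]
    exact zero_mem _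
  · -- (-1, 0)
    rw [gN, Submodule.mem_span_singleton] at ha
    rw [g0, Submodule.mem_span_pair] at hb
    obtain ⟨r, rfl⟩ := ha; obtain ⟨s, t, rfl⟩ := hb
    rw [show ((-1 : ℤ) + 0) = -1 by norm_num, gN]
    simp only [mul_add, smul_mul_assoc, mul_smul_comm, mul_one, xex, smul_zero, add_zero,
      smul_smul]
    exact Submodule.smul_mem _ _ (Submodule.subset_span rfl)
  · -- (-1, 1)
    rw [gN, Submodule.mem_span_singleton] at ha
    rw [gP, Submodule.mem_span_singleton] at hb
    obtain ⟨r, rfl⟩ := ha; obtain ⟨s, rfl⟩ := hb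
    rw [show ((-1 : ℤ) + 1) = 0 by norm_num, g0, Submodule.mem_span_pair]
    exact ⟨0, s * r, by simp [smul_mul_assoc, mul_smul_comm, smul_smul]⟩
  · -- (0, -1)
    rw [g0, Submodule.mem_span_pair] at ha
    rw [gN, Submodule.mem_span_singleton] at hb
    obtain ⟨r, s, rfl⟩ := ha; obtain ⟨t, rfl⟩ := hb
    rw [show ((0 : ℤ) + -1) = -1 by norm_num, gN]
    simp only [add_mul, smul_mul_assoc, mul_smul_comm, one_mul, exx, smul_zero, add_zero,
      smul_smul]
    exact Submodule.smul_mem _ _ (Submodule.subset_span rfl)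
  · -- (0, 0)
    rw [g0, Submodule.mem_span_pair] at ha hb
    obtain ⟨r, s, rfl⟩ := ha; obtain ⟨t, u, rfl⟩ := hb
    rw [show ((0 : ℤ) + 0) = 0 by norm_num, g0, Submodule.mem_span_pair]
    refine ⟨r * t, r * u + s * t, ?_⟩
    simp only [mul_add, add_mul, smul_mul_assoc, mul_smul_comm, one_mul, mul_one, exex,
      smul_zero, add_zero, smul_smul, add_smul]
    module
  · -- (0, 1)
    rw [g0, Submodule.mem_span_pair] at ha
    rw [gP, Submodule.mem_span_singleton] at hb
    obtain ⟨r, s, rfl⟩ := ha; obtain ⟨t, rfl⟩ := hb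
    rw [show ((0 : ℤ) + 1) = 1 by norm_num, gP]
    simp only [add_mul, smul_mul_assoc, mul_smul_comm, one_mul, exy, smul_zero, add_zero,
      smul_smul]
    exact Submodule.smul_mem _ _ (Submodule.subset_span rfl)
  · -- (1, -1)
    rw [gP, Submodule.mem_span_singleton] at ha
    rw [gN, Submodule.mem_span_singleton] at hb
    obtain ⟨r, rfl⟩ := ha; obtain ⟨s, rfl⟩ := hb
    simp only [smul_mul_assoc, mul_smul_comm, yx0, smul_zero]
    exact zero_mem _
  · -- (1, 0)
    rw [gP, Submodule.mem_span_singleton] at ha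
    rw [g0, Submodule.mem_span_pair] at hb
    obtain ⟨r, rfl⟩ := ha; obtain ⟨s, t, rfl⟩ := hb
    rw [show ((1 : ℤ) + 0) = 1 by norm_num, gP]
    simp only [mul_add, smul_mul_assoc, mul_smul_comm, mul_one, yex, smul_zero, add_zero,
      smul_smul]
    exact Submodule.smul_mem _ _ (Submodule.subset_span rfl)
  · -- (1, 1)
    rw [gP, Submodule.mem_span_singleton] at ha hb
    obtain ⟨r, rfl⟩ := ha; obtain ⟨s, rfl⟩ := hb
    simp only [smul_mul_assoc, mul_smul_comm, yy0, smul_zero]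
    exact zero_mem _

lemma T_deg0' : Subalgebra.toSubmodule (⊥ : Subalgebra K (Aq K)) ≤ grading K 0 := by
  rw [TS K, range1, Submodule.span_le, g0]
  rintro z rfl
  exact Submodule.subset_span (by simp)

lemma neg_supp' : Subalgebra.toSubmodule (Am K) ≤ ⨆ n : ℕ, grading K (-(n : ℤ)) := by
  rw [AmS K, range2, Submodule.span_le]
  rintro z (rfl|rfl)
  · refine Submodule.mem_iSup_of_mem 0 ?_
    rw [show (-((0 : ℕ) : ℤ)) = 0 by norm_num, g0]
    exact Submodule.subset_span (by simp)
  · refine Submodule.mem_iSup_of_mem 1 ?_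
    rw [show (-((1 : ℕ) : ℤ)) = -1 by norm_num, gN]
    exact Submodule.subset_span rfl

lemma pos_supp' : Subalgebra.toSubmodule (Ap K) ≤ ⨆ n : ℕ, grading K (n : ℤ) := by
  rw [ApS K, range2, Submodule.span_le]
  rintro z (rfl|rfl)
  · refine Submodule.mem_iSup_of_mem 0 ?_
    rw [show (((0 : ℕ) : ℤ)) = 0 by norm_num, g0]
    exact Submodule.subset_span (by simp)
  · refine Submodule.mem_iSup_of_mem 1 ?_
    rw [show (((1 : ℕ) : ℤ)) = 1 by norm_num, gP]
    exact Submodule.subset_span rfl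

lemma ξ_mem_Am : ξ K ∈ Subalgebra.toSubmodule (Am K) := by
  rw [Subalgebra.mem_toSubmodule]
  exact Algebra.subset_adjoin rfl

lemma η_mem_Ap : η K ∈ Subalgebra.toSubmodule (Ap K) := by
  rw [Subalgebra.mem_toSubmodule]
  exact Algebra.subset_adjoin rfl

lemma neg_graded' : Subalgebra.toSubmodule (Am K) =
    ⨆ i : ℤ, Subalgebra.toSubmodule (Am K) ⊓ grading K i := by
  apply le_antisymm
  · conv_lhs => rw [AmS K, range2]
    rw [Submodule.span_le]
    rintro z (rfl|rfl)
    · refine Submodule.mem_iSup_of_mem 0 ⟨(Am K).one_mem, ?_⟩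
      rw [g0]; exact Submodule.subset_span (by simp)
    · refine Submodule.mem_iSup_of_mem (-1) ⟨ξ_mem_Am K, ?_⟩
      rw [gN]; exact Submodule.subset_span rfl
  · exact iSup_le fun i => inf_le_left

lemma pos_graded' : Subalgebra.toSubmodule (Ap K) =
    ⨆ i : ℤ, Subalgebra.toSubmodule (Ap K) ⊓ grading K i := by
  apply le_antisymm
  · conv_lhs => rw [ApS K, range2]
    rw [Submodule.span_le]
    rintro z (rfl|rfl)
    · refine Submodule.mem_iSup_of_mem 0 ⟨(Ap K).one_mem, ?_⟩
      rw [g0]; exact Submodule.subset_span (by simp)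
    · refine Submodule.mem_iSup_of_mem 1 ⟨η_mem_Ap K, ?_⟩
      rw [gP]; exact Submodule.subset_span rfl
  · exact iSup_le fun i => inf_le_left

lemma neg_deg0' : Subalgebra.toSubmodule (Am K) ⊓ grading K 0 =
    Submodule.span K {(1 : Aq K)} := by
  apply le_antisymm
  · intro v hv
    rw [Submodule.mem_inf] at hv
    obtain ⟨hv1, hv2⟩ := hv
    rw [AmS K, range2, Submodule.mem_span_pair] at hv1
    obtain ⟨p, q, rfl⟩ := hv1
    rw [g0, Submodule.mem_span_pair] at hv2
    obtain ⟨c, d, hcd⟩ := hv2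
    have h1 : coord K 0 1 (c • (1 : Aq K) + d • (ξ K * η K)) = 0 := by
      rw [_root_.map_add, _root_.map_smul, _root_.map_smul, c01_one, c01_e, smul_zero,
        smul_zero, add_zero]
    rw [hcd, _root_.map_add, _root_.map_smul, _root_.map_smul, c01_one, c01_ξ, smul_zero,
      smul_eq_mul, mul_one, zero_add] at h1
    rw [h1, zero_smul, add_zero, Submodule.mem_span_singleton]
    exact ⟨p, rfl⟩
  · rw [Submodule.span_le]
    rintro z rfl
    refine ⟨(Am K).one_mem, ?_⟩
    rw [g0]; exact Submodule.subset_span (by simp)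

lemma pos_deg0' : Subalgebra.toSubmodule (Ap K) ⊓ grading K 0 =
    Submodule.span K {(1 : Aq K)} := by
  apply le_antisymm
  · intro v hv
    rw [Submodule.mem_inf] at hv
    obtain ⟨hv1, hv2⟩ := hv
    rw [ApS K, range2, Submodule.mem_span_pair] at hv1
    obtain ⟨p, q, rfl⟩ := hv1
    rw [g0, Submodule.mem_span_pair] at hv2
    obtain ⟨c, d, hcd⟩ := hv2
    have h1 : coord K 1 2 (c • (1 : Aq K) + d • (ξ K * η K)) = 0 := by
      rw [_root_.map_add, _root_.map_smul, _root_.map_smul, c12_one, c12_e, smul_zero,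
        smul_zero, add_zero]
    rw [hcd, _root_.map_add, _root_.map_smul, _root_.map_smul, c12_one, c12_η, smul_zero,
      smul_eq_mul, mul_one, zero_add] at h1
    rw [h1, zero_smul, add_zero, Submodule.mem_span_singleton]
    exact ⟨p, rfl⟩
  · rw [Submodule.span_le]
    rintro z rfl
    refine ⟨(Ap K).one_mem, ?_⟩
    rw [g0]; exact Submodule.subset_span (by simp)

lemma T_split' : ∀ (V : Type u) [AddCommGroup V]
    [Module ↥(⊥ : Subalgebra K (Aq K)) V],
    IsSimpleModule ↥(⊥ : Subalgebra K (Aq K)) V →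
    ∀ f : V →ₗ[↥(⊥ : Subalgebra K (Aq K))] V,
    ∃ c : K, ∀ v, f v = algebraMap K ↥(⊥ : Subalgebra K (Aq K)) c • v := by
  intro V _ _ hsimple f
  haveI := hsimple
  haveI : Nontrivial V := IsSimpleModule.nontrivial ↥(⊥ : Subalgebra K (Aq K)) V
  obtain ⟨v₀, hv₀⟩ := exists_ne (0 : V)
  set R := ↥(⊥ : Subalgebra K (Aq K))
  have hspan : Submodule.span R {v₀} = ⊤ := by
    rcases hsimple.toIsSimpleOrder.eq_bot_or_eq_top (Submodule.span R {v₀}) with h | h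
    · exfalso
      apply hv₀
      have hm := Submodule.mem_span_singleton_self (R := R) v₀
      rw [h, Submodule.mem_bot] at hm
      exact hm
    · exact h
  obtain ⟨r, hr⟩ := Submodule.mem_span_singleton.1
    (show f v₀ ∈ Submodule.span R {v₀} by rw [hspan]; trivial)
  obtain ⟨c, hc⟩ := Algebra.mem_bot.1 r.2
  have hr' : algebraMap K R c = r := Subtype.ext hc
  refine ⟨c, fun v => ?_⟩
  obtain ⟨s, rfl⟩ := Submodule.mem_span_singleton.1
    (show v ∈ Submodule.span R {v₀} by rw [hspan]; trivial)
  have hcomm : algebraMap K R c * s = s * algebraMap K R c :=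
    Subtype.ext (Algebra.commutes c (s : Aq K))
  rw [f.map_smul, ← hr, smul_smul, ← hr', ← hcomm, mul_smul]

lemma η_ne_ξ_stuff : (η K * 1) * ξ K = 0 := by rw [mul_one, yx0]

set_option synthInstance.maxHeartbeats 1000000
set_option maxHeartbeats 1000000

/-- `(K[x]/(x²), K, K[y]/(y²))` is a triangular decomposition of
`A = K⟨x,y⟩/⟨x², yx, y²⟩` (with `deg x = -1`, `deg y = 1`), but the opposite-order
multiplication map `K[y]/(y²) ⊗ K ⊗ K[x]/(x²) → A` is not injective, since
`y ⊗ 1 ⊗ x` maps to `yx = 0`. -/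
theorem triangular_not_ambidextrous :
    TriangularPaper.TriangularDecomposition K (Aq K) (grading K) (Am K) ⊥ (Ap K) ∧
    ξ K ∈ grading K (-1) ∧ η K ∈ grading K 1 ∧
    TriangularPaper.triMulMap K (Aq K) (Ap K).toSubmodule
        (⊥ : Subalgebra K (Aq K)).toSubmodule (Am K).toSubmodule
      (((⟨η K, Algebra.subset_adjoin (Set.mem_singleton _)⟩ : ↥(Ap K).toSubmodule) ⊗ₜ[K]
          (⟨1, Subalgebra.one_mem _⟩ : ↥(⊥ : Subalgebra K (Aq K)).toSubmodule)) ⊗ₜ[K]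
        (⟨ξ K, Algebra.subset_adjoin (Set.mem_singleton _)⟩ : ↥(Am K).toSubmodule)) = 0 ∧
    ¬ Function.Injective (TriangularPaper.triMulMap K (Aq K) (Ap K).toSubmodule
        (⊥ : Subalgebra K (Aq K)).toSubmodule (Am K).toSubmodule) := by
  have h0 : TriangularPaper.triMulMap K (Aq K) (Ap K).toSubmodule
      (⊥ : Subalgebra K (Aq K)).toSubmodule (Am K).toSubmodule
      (((⟨η K, Algebra.subset_adjoin (Set.mem_singleton _)⟩ : ↥(Ap K).toSubmodule) ⊗ₜ[K]
          (⟨1, Subalgebra.one_mem _⟩ : ↥(⊥ : Subalgebra K (Aq K)).toSubmodule)) ⊗ₜ[K]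
        (⟨ξ K, Algebra.subset_adjoin (Set.mem_singleton _)⟩ : ↥(Am K).toSubmodule)) = 0 := by
    simp only [TriangularPaper.triMulMap, TriangularPaper.mulMap, LinearMap.coe_comp,
      Function.comp_apply, TensorProduct.map_tmul, LinearMap.mul'_apply, Submodule.coe_subtype]
    rw [mul_one, yx0]
  refine ⟨⟨grading_internal K, ?_, grading_mul_mem K, tri_bij K, T_deg0' K, neg_supp' K,
    pos_supp' K, neg_graded' K, pos_graded' K, neg_deg0' K, pos_deg0' K, ?_, ?_, T_split' K⟩,
    ?_, ?_, h0, ?_⟩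
  · rw [g0]; exact Submodule.subset_span (by simp)
  · rw [Algebra.toSubmodule_bot, Submodule.mul_one, Submodule.one_mul]
  · rw [Algebra.toSubmodule_bot, Submodule.mul_one, Submodule.one_mul]
  · rw [gN]; exact Submodule.subset_span rfl
  · rw [gP]; exact Submodule.subset_span rfl
  · intro hinj
    have ht : (((⟨η K, Algebra.subset_adjoin (Set.mem_singleton _)⟩ :
          ↥(Ap K).toSubmodule) ⊗ₜ[K]
        (⟨1, Subalgebra.one_mem _⟩ : ↥(⊥ : Subalgebra K (Aq K)).toSubmodule)) ⊗ₜ[K]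
        (⟨ξ K, Algebra.subset_adjoin (Set.mem_singleton _)⟩ : ↥(Am K).toSubmodule)) = 0 :=
      hinj (by rw [h0, _root_.map_zero])
    have hF := congrArg
      (⇑((LinearMap.mul' K K).comp (TensorProduct.map
        ((LinearMap.mul' K K).comp (TensorProduct.map
          ((coord K 1 2).comp (Submodule.subtype _))
          ((coord K 0 0).comp (Submodule.subtype _))))
        ((coord K 0 1).comp (Submodule.subtype _))))) ht
    simp only [LinearMap.coe_comp, Function.comp_apply, TensorProduct.map_tmul,
      LinearMap.mul'_apply, Submodule.coe_subtype, _root_.map_zero] at hF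
    rw [c12_η, c00_one, c01_ξ, mul_one, mul_one] at hF
    exact one_ne_zero hF

end Stmt16
end
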